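/- arXiv:1304.7960 — 6 statements merged into one kernel-verified Lean document; each statement's English description precedes it below -/
import Mathlib

section
/- If a sub-σ-algebra ℬ has an atom D (an element D ∈ ℬ such that every B ∈ ℬ satisfies μ(B ∩ D) = 0 or μ(D \ B) = 0), then β(ℬ, ℬ) ≤ 2(1 − μ(D)). -/
open MeasureTheory

/-- The set of values `(1/2) ∑ᵢ ∑ⱼ |μ(Aᵢ ∩ Bⱼ) - μ(Aᵢ)μ(Bⱼ)|` over finite
partitions `{Aᵢ} ⊆ 𝒜`, `{Bⱼ} ⊆ ℬ` of `Ω`. -/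
def betaSet {Ω : Type*} (m0 𝒜 ℬ : MeasurableSpace Ω) (μ : @Measure Ω m0) : Set ℝ :=
  {x | ∃ (m n : ℕ) (A : Fin m → Set Ω) (B : Fin n → Set Ω),
    (∀ i, MeasurableSet[𝒜] (A i)) ∧ (∀ j, MeasurableSet[ℬ] (B j)) ∧
    Pairwise (Function.onFun Disjoint A) ∧ Pairwise (Function.onFun Disjoint B) ∧
    (⋃ i, A i) = Set.univ ∧ (⋃ j, B j) = Set.univ ∧
    x = (1/2) * ∑ i, ∑ j,
      |(μ (A i ∩ B j)).toReal - (μ (A i)).toReal * (μ (B j)).toReal|}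

/-- The β-mixing coefficient of the pair of σ-algebras `𝒜`, `ℬ`. -/
noncomputable def betaMix {Ω : Type*} (m0 𝒜 ℬ : MeasurableSpace Ω)
    (μ : @Measure Ω m0) : ℝ :=
  sSup (betaSet m0 𝒜 ℬ μ)

lemma sum_inter_part {Ω : Type*} [m : MeasurableSpace Ω] (μ : Measure Ω)
    [IsProbabilityMeasure μ] {n : ℕ} {s : Fin n → Set Ω}
    (hs : ∀ i, MeasurableSet (s i)) (hd : Pairwise (Function.onFun Disjoint s))
    (hu : (⋃ i, s i) = Set.univ) (T : Set Ω) (hT : MeasurableSet T) :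
    ∑ i, (μ (s i ∩ T)).toReal = (μ T).toReal := by
  have h1 : μ (⋃ i, s i ∩ T) = ∑' i, μ (s i ∩ T) :=
    measure_iUnion
      (fun i j hij => Disjoint.mono Set.inter_subset_left Set.inter_subset_left (hd hij))
      (fun i => (hs i).inter hT)
  have h2 : (⋃ i, s i ∩ T) = T := by
    rw [← Set.iUnion_inter, hu, Set.univ_inter]
  rw [h2, tsum_fintype] at h1
  rw [h1, ENNReal.toReal_sum (fun i _ => measure_ne_top μ _)]

lemma key_atom {Ω : Type*} [m : MeasurableSpace Ω] (μ : Measure Ω)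
    (ℬ : MeasurableSpace Ω) (hℬ : ℬ ≤ m) (D : Set Ω)
    (hatom : ∀ B : Set Ω, MeasurableSet[ℬ] B → μ (B ∩ D) = 0 ∨ μ (D \ B) = 0)
    {A B : Set Ω} (hA : MeasurableSet[ℬ] A) (hB : MeasurableSet[ℬ] B) :
    μ (A ∩ B ∩ D) * μ D = μ (A ∩ D) * μ (B ∩ D) := by
  have hA' : MeasurableSet[m] A := hℬ _ hA
  rcases hatom A hA with h | h
  · have h1 : μ (A ∩ B ∩ D) = 0 :=
      measure_mono_null (Set.inter_subset_inter_left D Set.inter_subset_left) h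
    simp [h1, h]
  · have hAD : μ (A ∩ D) = μ D := by
      have h2 : μ (D ∩ A) + μ (D \ A) = μ D := measure_inter_add_diff D hA'
      rw [h, add_zero] at h2
      rw [Set.inter_comm] at h2
      exact h2
    have hABD : μ (A ∩ B ∩ D) = μ (B ∩ D) := by
      refine le_antisymm (measure_mono fun x hx => ⟨hx.1.2, hx.2⟩) ?_
      calc μ (B ∩ D) ≤ μ ((A ∩ B ∩ D) ∪ (D \ A)) := by
            refine measure_mono fun x hx => ?_
            by_cases hxA : x ∈ A
            · exact Or.inl ⟨⟨hxA, hx.1⟩, hx.2⟩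
            · exact Or.inr ⟨hx.2, hxA⟩
        _ ≤ μ (A ∩ B ∩ D) + μ (D \ A) := measure_union_le _ _
        _ = μ (A ∩ B ∩ D) := by rw [h, add_zero]
    rw [hABD, hAD, mul_comm]

/-- If a sub-σ-algebra `ℬ` has an atom `D`, then `β(ℬ,ℬ) ≤ 2(1 - μ D)`. -/
theorem stmt5 {Ω : Type*} [m : MeasurableSpace Ω] (μ : Measure Ω)
    [IsProbabilityMeasure μ] (ℬ : MeasurableSpace Ω) (hℬ : ℬ ≤ m) (D : Set Ω)
    (hD : MeasurableSet[ℬ] D)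
    (hatom : ∀ B : Set Ω, MeasurableSet[ℬ] B → μ (B ∩ D) = 0 ∨ μ (D \ B) = 0) :
    betaMix m ℬ ℬ μ ≤ 2 * (1 - (μ D).toReal) := by
  have hD' : MeasurableSet[m] D := hℬ _ hD
  have hd1 : (μ D).toReal ≤ 1 := by
    have := ENNReal.toReal_mono (by simp) (prob_le_one (μ := μ) (s := D))
    simpa using this
  apply Real.sSup_le _ (by linarith)
  rintro x ⟨mA, nB, A, B, hA, hB, hdA, hdB, hUA, hUB, rfl⟩
  have hAm : ∀ i, MeasurableSet[m] (A i) := fun i => hℬ _ (hA i)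
  have hBm : ∀ j, MeasurableSet[m] (B j) := fun j => hℬ _ (hB j)
  set d : ℝ := (μ D).toReal with hdd
  set e : ℝ := (μ Dᶜ).toReal with hee
  have hde : d + e = 1 := by
    have h1 : μ D + μ Dᶜ = 1 := by simpa using measure_add_measure_compl (μ := μ) hD'
    have := congrArg ENNReal.toReal h1
    rwa [ENNReal.toReal_add (measure_ne_top μ _) (measure_ne_top μ _)] at this
  have hd0 : 0 ≤ d := ENNReal.toReal_nonneg
  have he0 : 0 ≤ e := ENNReal.toReal_nonneg
  -- splitting a measurable set along D
  have hsplit : ∀ S : Set Ω, MeasurableSet[m] S →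
      (μ S).toReal = (μ (S ∩ D)).toReal + (μ (S ∩ Dᶜ)).toReal := by
    intro S hS
    have h2 : μ (S ∩ D) + μ (S \ D) = μ S := measure_inter_add_diff S hD'
    rw [Set.diff_eq] at h2
    rw [← h2, ENNReal.toReal_add (measure_ne_top μ _) (measure_ne_top μ _)]
  -- per-term bound
  have hterm : ∀ i j,
      |(μ (A i ∩ B j)).toReal - (μ (A i)).toReal * (μ (B j)).toReal| ≤
        (μ (A i ∩ B j ∩ D)).toReal * e + (μ (A i ∩ B j ∩ Dᶜ)).toReal +
        (μ (A i ∩ D)).toReal * (μ (B j ∩ Dᶜ)).toReal +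
        (μ (B j ∩ D)).toReal * (μ (A i ∩ Dᶜ)).toReal +
        (μ (A i ∩ Dᶜ)).toReal * (μ (B j ∩ Dᶜ)).toReal := by
    intro i j
    have hkey : (μ (A i ∩ B j ∩ D)).toReal * d =
        (μ (A i ∩ D)).toReal * (μ (B j ∩ D)).toReal := by
      have := congrArg ENNReal.toReal (key_atom (m := m) μ ℬ hℬ D hatom (hA i) (hB j))
      rwa [ENNReal.toReal_mul, ENNReal.toReal_mul] at this
    have h1 := hsplit (A i) (hAm i)
    have h2 := hsplit (B j) (hBm j)
    have h3 := hsplit (A i ∩ B j) ((hAm i).inter (hBm j))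
    set r := (μ (A i ∩ B j ∩ D)).toReal
    set a' := (μ (A i ∩ B j ∩ Dᶜ)).toReal
    set p := (μ (A i ∩ D)).toReal
    set a := (μ (A i ∩ Dᶜ)).toReal
    set q := (μ (B j ∩ D)).toReal
    set b := (μ (B j ∩ Dᶜ)).toReal
    have hr : (0:ℝ) ≤ r := ENNReal.toReal_nonneg
    have ha' : (0:ℝ) ≤ a' := ENNReal.toReal_nonneg
    have hp : (0:ℝ) ≤ p := ENNReal.toReal_nonneg
    have ha : (0:ℝ) ≤ a := ENNReal.toReal_nonneg
    have hq : (0:ℝ) ≤ q := ENNReal.toReal_nonneg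
    have hb : (0:ℝ) ≤ b := ENNReal.toReal_nonneg
    rw [h1, h2, h3, abs_le]
    constructor
    · nlinarith [mul_nonneg hp hb, mul_nonneg hq ha, mul_nonneg ha hb,
        mul_nonneg hr he0]
    · nlinarith [mul_nonneg hp hb, mul_nonneg hq ha, mul_nonneg ha hb,
        mul_nonneg hr he0]
  -- sums of the pieces
  have hsumA_D : ∑ i, (μ (A i ∩ D)).toReal = d :=
    sum_inter_part (m := m) μ hAm hdA hUA D hD'
  have hsumA_Dc : ∑ i, (μ (A i ∩ Dᶜ)).toReal = e :=
    sum_inter_part (m := m) μ hAm hdA hUA Dᶜ hD'.compl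
  have hsumB_D : ∑ j, (μ (B j ∩ D)).toReal = d :=
    sum_inter_part (m := m) μ hBm hdB hUB D hD'
  have hsumB_Dc : ∑ j, (μ (B j ∩ Dᶜ)).toReal = e :=
    sum_inter_part (m := m) μ hBm hdB hUB Dᶜ hD'.compl
  have hassoc : ∀ (i : Fin mA) (j : Fin nB) (T : Set Ω),
      A i ∩ B j ∩ T = B j ∩ (A i ∩ T) := by
    intro i j T
    rw [Set.inter_comm (A i) (B j), Set.inter_assoc]
  have hsumAB_D : ∑ i, ∑ j, (μ (A i ∩ B j ∩ D)).toReal = d := by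
    have : ∀ i : Fin mA, ∑ j, (μ (A i ∩ B j ∩ D)).toReal = (μ (A i ∩ D)).toReal := by
      intro i
      simp_rw [hassoc i _ D]
      exact sum_inter_part (m := m) μ hBm hdB hUB _ ((hAm i).inter hD')
    simp_rw [this]
    exact hsumA_D
  have hsumAB_Dc : ∑ i, ∑ j, (μ (A i ∩ B j ∩ Dᶜ)).toReal = e := by
    have : ∀ i : Fin mA, ∑ j, (μ (A i ∩ B j ∩ Dᶜ)).toReal = (μ (A i ∩ Dᶜ)).toReal := by
      intro i
      simp_rw [hassoc i _ Dᶜ]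
      exact sum_inter_part (m := m) μ hBm hdB hUB _ ((hAm i).inter hD'.compl)
    simp_rw [this]
    exact hsumA_Dc
  -- total bound
  have htotal : ∑ i, ∑ j,
      |(μ (A i ∩ B j)).toReal - (μ (A i)).toReal * (μ (B j)).toReal| ≤
      d * e + e + d * e + d * e + e * e := by
    calc ∑ i, ∑ j, |(μ (A i ∩ B j)).toReal - (μ (A i)).toReal * (μ (B j)).toReal|
        ≤ ∑ i, ∑ j, ((μ (A i ∩ B j ∩ D)).toReal * e + (μ (A i ∩ B j ∩ Dᶜ)).toReal +
            (μ (A i ∩ D)).toReal * (μ (B j ∩ Dᶜ)).toReal +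
            (μ (B j ∩ D)).toReal * (μ (A i ∩ Dᶜ)).toReal +
            (μ (A i ∩ Dᶜ)).toReal * (μ (B j ∩ Dᶜ)).toReal) :=
          Finset.sum_le_sum fun i _ => Finset.sum_le_sum fun j _ => hterm i j
      _ = d * e + e + d * e + d * e + e * e := by
          have E1 : ∑ i, ∑ j, (μ (A i ∩ B j ∩ D)).toReal * e = d * e := by
            simp_rw [← Finset.sum_mul]
            rw [hsumAB_D]
          have E3 : ∑ i, ∑ j,
              (μ (A i ∩ D)).toReal * (μ (B j ∩ Dᶜ)).toReal = d * e := by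
            simp_rw [← Finset.mul_sum, hsumB_Dc, ← Finset.sum_mul, hsumA_D]
          have E4 : ∑ i, ∑ j,
              (μ (B j ∩ D)).toReal * (μ (A i ∩ Dᶜ)).toReal = d * e := by
            rw [Finset.sum_comm]
            simp_rw [← Finset.mul_sum, hsumA_Dc, ← Finset.sum_mul, hsumB_D]
          have E5 : ∑ i, ∑ j,
              (μ (A i ∩ Dᶜ)).toReal * (μ (B j ∩ Dᶜ)).toReal = e * e := by
            simp_rw [← Finset.mul_sum, hsumB_Dc, ← Finset.sum_mul, hsumA_Dc]
          simp only [Finset.sum_add_distrib]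
          rw [E1, E3, E4, E5, hsumAB_Dc]
  have : (1:ℝ)/2 * (d * e + e + d * e + d * e + e * e) ≤ 2 * (1 - d) := by
    nlinarith [mul_nonneg hd0 he0]
  calc (1:ℝ)/2 * ∑ i, ∑ j,
      |(μ (A i ∩ B j)).toReal - (μ (A i)).toReal * (μ (B j)).toReal|
      ≤ (1:ℝ)/2 * (d * e + e + d * e + d * e + e * e) := by linarith
    _ ≤ 2 * (1 - d) := this
end

section
/- If 𝒜₁, 𝒜₂ and ℬ₁, ℬ₂ are sub-σ-algebras with the pair of σ-algebras (𝒜₁ ∨ ℬ₁) and (𝒜₂ ∨ ℬ₂) arranged so that 𝒜₁, 𝒜₂ are jointly independent of ℬ₁, ℬ₂ (i.e., σ(𝒜₁ ∪ 𝒜₂) is independent of σ(ℬ₁ ∪ ℬ₂)), then β(𝒜₁ ∨ ℬ₁, 𝒜₂ ∨ ℬ₂) ≤ β(𝒜₁, 𝒜₂) + β(ℬ₁, ℬ₂). -/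
open MeasureTheory

namespace BetaAux

open MeasureTheory Set Function

set_option linter.unusedSectionVars false

variable {Ω : Type*} {m : MeasurableSpace Ω} (μ : Measure Ω) [IsProbabilityMeasure μ]

/-- real-valued measure -/
noncomputable def mr (S : Set Ω) : ℝ := (μ S).toReal

lemma mr_nonneg (S : Set Ω) : 0 ≤ mr μ S := ENNReal.toReal_nonneg

lemma mr_mono {S T : Set Ω} (h : S ⊆ T) : mr μ S ≤ mr μ T :=
  ENNReal.toReal_le_toReal (measure_ne_top μ S) (measure_ne_top μ T) |>.mpr (measure_mono h)

lemma mr_univ : mr μ (Set.univ) = 1 := by simp [mr]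

lemma mr_le_one (S : Set Ω) : mr μ S ≤ 1 := by
  simpa [mr_univ μ] using mr_mono μ (Set.subset_univ S)

lemma mr_union_le (S T : Set Ω) : mr μ (S ∪ T) ≤ mr μ S + mr μ T := by
  have h := measure_union_le (μ := μ) S T
  have := ENNReal.toReal_le_toReal (measure_ne_top μ _)
    (by simp [measure_ne_top μ S, measure_ne_top μ T, ENNReal.add_ne_top]) |>.mpr h
  simpa [mr, ENNReal.toReal_add (measure_ne_top μ S) (measure_ne_top μ T)] using this

lemma mr_biUnion_le {ι : Type*} (s : Finset ι) (f : ι → Set Ω) :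
    mr μ (⋃ i ∈ s, f i) ≤ ∑ i ∈ s, mr μ (f i) := by
  have h := measure_biUnion_finset_le (μ := μ) s f
  have h2 : ((∑ i ∈ s, μ (f i)).toReal : ℝ) = ∑ i ∈ s, mr μ (f i) :=
    ENNReal.toReal_sum (fun i _ => measure_ne_top μ _)
  calc mr μ (⋃ i ∈ s, f i) ≤ (∑ i ∈ s, μ (f i)).toReal :=
        ENNReal.toReal_le_toReal (measure_ne_top μ _)
          (by exact (ENNReal.sum_lt_top.2 fun i _ => (measure_lt_top μ _)).ne) |>.mpr h
    _ = _ := h2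

lemma abs_mr_sub_le (S T : Set Ω) : |mr μ S - mr μ T| ≤ mr μ (symmDiff S T) := by
  have key : ∀ U V : Set Ω, mr μ U ≤ mr μ V + mr μ (symmDiff U V) := by
    intro U V
    have hsub : U ⊆ V ∪ symmDiff U V := by
      intro x hx
      by_cases h : x ∈ V
      · exact Or.inl h
      · exact Or.inr (by rw [Set.mem_symmDiff]; exact Or.inl ⟨hx, h⟩)
    calc mr μ U ≤ mr μ (V ∪ symmDiff U V) := mr_mono μ hsub
      _ ≤ _ := mr_union_le μ _ _
  rw [abs_sub_le_iff]
  constructor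
  · linarith [key S T]
  · have := key T S
    rw [symmDiff_comm] at this
    linarith

lemma symmDiff_inter_subset (S T U V : Set Ω) :
    symmDiff (S ∩ U) (T ∩ V) ⊆ symmDiff S T ∪ symmDiff U V := by
  intro x hx
  rw [Set.mem_symmDiff] at hx
  simp only [Set.mem_union, Set.mem_symmDiff, Set.mem_inter_iff] at *
  tauto

lemma mr_biUnion_eq {ι : Type*} (s : Finset ι) (f : ι → Set Ω)
    (hm : ∀ i ∈ s, MeasurableSet (f i)) (hd : (s : Set ι).PairwiseDisjoint f) :
    mr μ (⋃ i ∈ s, f i) = ∑ i ∈ s, mr μ (f i) := by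
  rw [mr, measure_biUnion_finset hd hm]
  exact ENNReal.toReal_sum (fun i _ => measure_ne_top μ _)

lemma sum_mr_partition {ι : Type*} [Fintype ι] (C : ι → Set Ω)
    (hm : ∀ i, MeasurableSet (C i)) (hd : Pairwise (Function.onFun Disjoint C))
    (hu : (⋃ i, C i) = Set.univ) : ∑ i, mr μ (C i) = 1 := by
  have : (⋃ i ∈ (Finset.univ : Finset ι), C i) = Set.univ := by
    simpa using hu
  rw [← mr_biUnion_eq μ Finset.univ C (fun i _ => hm i)
    (fun i _ j _ hij => hd hij), this, mr_univ]

/-- double sum -/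
noncomputable def bsum {ι κ : Type*} [Fintype ι] [Fintype κ]
    (C : ι → Set Ω) (D : κ → Set Ω) : ℝ :=
  ∑ i, ∑ j, |mr μ (C i ∩ D j) - mr μ (C i) * mr μ (D j)|

lemma bsum_comm {ι κ : Type*} [Fintype ι] [Fintype κ] (C : ι → Set Ω) (D : κ → Set Ω) :
    bsum μ C D = bsum μ D C := by
  rw [bsum, bsum, Finset.sum_comm]
  exact Finset.sum_congr rfl fun j _ => Finset.sum_congr rfl fun i _ => by
    rw [Set.inter_comm, mul_comm]

section atoms

variable {ι : Type*} [Fintype ι]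

/-- atom of a finite family of generators -/
def atom (G : ι → Set Ω) (f : ι → Bool) : Set Ω := {x | ∀ i, x ∈ G i ↔ f i = true}

lemma atom_disjoint (G : ι → Set Ω) : Pairwise (Function.onFun Disjoint (atom G)) := by
  intro f g hfg
  rw [Function.onFun, Set.disjoint_left]
  intro x hx hy
  apply hfg
  funext i
  have h1 := hx i
  have h2 := hy i
  cases hf : f i <;> cases hg : g i <;> simp_all

lemma atom_cover (G : ι → Set Ω) : (⋃ f, atom G f) = Set.univ := by
  classical
  ext x
  simp only [Set.mem_iUnion, Set.mem_univ, iff_true]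
  exact ⟨fun i => decide (x ∈ G i), fun i => by simp [atom]⟩

lemma atom_measurable {𝒜 : MeasurableSpace Ω} {G : ι → Set Ω}
    (hG : ∀ i, MeasurableSet[𝒜] (G i)) (f : ι → Bool) :
    MeasurableSet[𝒜] (atom G f) := by
  have : atom G f = ⋂ i, (if f i = true then G i else (G i)ᶜ) := by
    ext x
    simp only [atom, Set.mem_setOf_eq, Set.mem_iInter]
    apply forall_congr'
    intro i
    cases hf : f i <;> simp [hf]
  rw [this]
  exact MeasurableSet.iInter fun i => by
    by_cases hf : f i = true
    · rw [if_pos hf]; exact hG i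
    · rw [if_neg hf]; exact (hG i).compl

lemma mem_atom_iff {G : ι → Set Ω} {f : ι → Bool} {x : Ω} :
    x ∈ atom G f ↔ ∀ i, (x ∈ G i ↔ f i = true) := Iff.rfl

end atoms

/-- finite unions of measurable rectangles -/
def IsRU (𝒜 ℬ : MeasurableSpace Ω) (S : Set Ω) : Prop :=
  ∃ (ι : Type) (_ : Fintype ι) (A B : ι → Set Ω),
    (∀ i, MeasurableSet[𝒜] (A i)) ∧ (∀ i, MeasurableSet[ℬ] (B i)) ∧ S = ⋃ i, A i ∩ B i

lemma isRU_empty (𝒜 ℬ : MeasurableSpace Ω) : IsRU 𝒜 ℬ (∅ : Set Ω) :=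
  ⟨Fin 0, inferInstance, Fin.elim0, Fin.elim0, fun i => i.elim0, fun i => i.elim0, by simp⟩

lemma isRU_rect {𝒜 ℬ : MeasurableSpace Ω} {A B : Set Ω}
    (hA : MeasurableSet[𝒜] A) (hB : MeasurableSet[ℬ] B) : IsRU 𝒜 ℬ (A ∩ B) :=
  ⟨Unit, inferInstance, fun _ => A, fun _ => B, fun _ => hA, fun _ => hB,
    (Set.iUnion_const _).symm⟩

lemma isRU_compl {𝒜 ℬ : MeasurableSpace Ω} {S : Set Ω} (h : IsRU 𝒜 ℬ S) :
    IsRU 𝒜 ℬ Sᶜ := by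
  classical
  obtain ⟨ι, inst, A, B, hA, hB, rfl⟩ := h
  refine ⟨ι → Bool, inferInstance,
    fun f => ⋂ i, (if f i = true then (A i)ᶜ else Set.univ),
    fun f => ⋂ i, (if f i = true then Set.univ else (B i)ᶜ),
    fun f => MeasurableSet.iInter fun i => ?_,
    fun f => MeasurableSet.iInter fun i => ?_, ?_⟩
  · by_cases hf : f i = true
    · rw [if_pos hf]; exact (hA i).compl
    · rw [if_neg hf]; exact MeasurableSet.univ
  · by_cases hf : f i = true
    · rw [if_pos hf]; exact MeasurableSet.univ
    · rw [if_neg hf]; exact (hB i).compl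
  · ext x
    constructor
    · intro h
      refine Set.mem_iUnion.2 ⟨fun i => decide (x ∉ A i),
        Set.mem_inter (Set.mem_iInter.2 fun i => ?_) (Set.mem_iInter.2 fun i => ?_)⟩
      · by_cases hx : x ∈ A i
        · rw [if_neg (by simp [hx])]; exact Set.mem_univ x
        · rw [if_pos (by simp [hx])]; exact hx
      · by_cases hx : x ∈ A i
        · rw [if_neg (by simp [hx])]
          intro hb
          exact h (Set.mem_iUnion.2 ⟨i, hx, hb⟩)
        · rw [if_pos (by simp [hx])]; exact Set.mem_univ x
    · intro hx hmem
      obtain ⟨f, hf⟩ := Set.mem_iUnion.1 hx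
      obtain ⟨i, hi⟩ := Set.mem_iUnion.1 hmem
      have h1 := Set.mem_iInter.1 hf.1 i
      have h2 := Set.mem_iInter.1 hf.2 i
      by_cases hfi : f i = true
      · rw [if_pos hfi] at h1; exact h1 hi.1
      · rw [if_neg hfi] at h2; exact h2 hi.2

lemma isRU_iUnion {𝒜 ℬ : MeasurableSpace Ω} {n : ℕ} {f : Fin n → Set Ω}
    (h : ∀ i, IsRU 𝒜 ℬ (f i)) : IsRU 𝒜 ℬ (⋃ i, f i) := by
  choose ι inst A B hA hB heq using h
  letI : ∀ i, Fintype (ι i) := inst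
  refine ⟨Σ i, ι i, inferInstance, fun p => A p.1 p.2, fun p => B p.1 p.2,
    fun p => hA p.1 p.2, fun p => hB p.1 p.2, ?_⟩
  rw [Set.iUnion_sigma]
  exact Set.iUnion_congr fun i => heq i

theorem approx (𝒜 ℬ : MeasurableSpace Ω) (h𝒜 : 𝒜 ≤ m) (hℬ : ℬ ≤ m) (S : Set Ω)
    (hS : MeasurableSet[𝒜 ⊔ ℬ] S) {ε : ℝ} (hε : 0 < ε) :
    ∃ L, IsRU 𝒜 ℬ L ∧ mr μ (symmDiff S L) < ε := by
  classical
  let 𝒮 : MeasurableSpace Ω :=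
    { MeasurableSet' := fun T => MeasurableSet[m] T ∧
        ∀ ε : ℝ, 0 < ε → ∃ L, IsRU 𝒜 ℬ L ∧ mr μ (symmDiff T L) < ε
      measurableSet_empty := by
        refine ⟨@MeasurableSet.empty Ω m, fun ε hε => ⟨∅, isRU_empty _ _, ?_⟩⟩
        simp [mr, hε]
      measurableSet_compl := by
        rintro T ⟨hTm, hT⟩
        refine ⟨MeasurableSet.compl (m := m) hTm, fun ε hε => ?_⟩
        obtain ⟨L, hL, herr⟩ := hT ε hε
        exact ⟨Lᶜ, isRU_compl hL, by rwa [compl_symmDiff_compl]⟩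
      measurableSet_iUnion := by
        rintro T hTP
        have hTm : ∀ n, MeasurableSet[m] (T n) := fun n => (hTP n).1
        refine ⟨MeasurableSet.iUnion (m := m) hTm, fun ε hε => ?_⟩
        have htd : Filter.Tendsto (fun N => mr μ (Set.accumulate T N)) Filter.atTop
            (nhds (mr μ (⋃ n, T n))) :=
          (ENNReal.tendsto_toReal (measure_ne_top μ _)).comp
            tendsto_measure_iUnion_accumulate
        have hlt : mr μ (⋃ n, T n) - ε/2 < mr μ (⋃ n, T n) := by linarith
        obtain ⟨N, hN⟩ := (htd.eventually (eventually_gt_nhds hlt)).exists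
        have hsub : Set.accumulate T N ⊆ ⋃ n, T n := by
          rw [Set.accumulate_def]
          exact Set.iUnion₂_subset fun i _ => Set.subset_iUnion T i
        have hAccm : MeasurableSet[m] (Set.accumulate T N) := by
          rw [Set.accumulate_def]
          exact MeasurableSet.biUnion (m := m) (Set.to_countable _) fun i _ => hTm i
        have key : mr μ ((⋃ n, T n) \ Set.accumulate T N) < ε/2 := by
          have hdiff := measure_diff hsub hAccm.nullMeasurableSet (measure_ne_top μ _)
          have : mr μ ((⋃ n, T n) \ Set.accumulate T N)
              = mr μ (⋃ n, T n) - mr μ (Set.accumulate T N) := by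
            rw [mr, hdiff, ENNReal.toReal_sub_of_le (measure_mono hsub) (measure_ne_top μ _)]
            rfl
          rw [this]; linarith
        have hpos : (0:ℝ) < ε/(2*(N+1)) := by positivity
        choose L hLRU hLerr using fun n : Fin (N+1) => (hTP n).2 (ε/(2*(N+1))) hpos
        refine ⟨⋃ n, L n, isRU_iUnion hLRU, ?_⟩
        have hsub2 : symmDiff (⋃ n, T n) (⋃ n, L n) ⊆
            ((⋃ n, T n) \ Set.accumulate T N) ∪ ⋃ n : Fin (N+1), symmDiff (T n) (L n) := by
          intro x hx
          rw [Set.mem_symmDiff] at hx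
          rcases hx with ⟨hxU, hxL⟩ | ⟨hxL, hxU⟩
          · by_cases hacc : x ∈ Set.accumulate T N
            · rw [Set.accumulate_def] at hacc
              obtain ⟨n, hn, hxn⟩ := Set.mem_iUnion₂.1 hacc
              refine Or.inr (Set.mem_iUnion.2 ⟨⟨n, Nat.lt_succ_of_le hn⟩, ?_⟩)
              rw [Set.mem_symmDiff]
              exact Or.inl ⟨hxn, fun h => hxL (Set.mem_iUnion.2 ⟨⟨n, Nat.lt_succ_of_le hn⟩, h⟩)⟩
            · exact Or.inl ⟨hxU, hacc⟩
          · obtain ⟨n, hxn⟩ := Set.mem_iUnion.1 hxL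
            refine Or.inr (Set.mem_iUnion.2 ⟨n, ?_⟩)
            rw [Set.mem_symmDiff]
            exact Or.inr ⟨hxn, fun h => hxU (Set.mem_iUnion.2 ⟨n, h⟩)⟩
        have hb1 : mr μ (symmDiff (⋃ n, T n) (⋃ n, L n)) ≤
            mr μ ((⋃ n, T n) \ Set.accumulate T N)
              + mr μ (⋃ n : Fin (N+1), symmDiff (T n) (L n)) :=
          le_trans (mr_mono μ hsub2) (mr_union_le μ _ _)
        have hb2 : mr μ (⋃ n : Fin (N+1), symmDiff (T n) (L n))
            ≤ ∑ n : Fin (N+1), mr μ (symmDiff (T n) (L n)) := by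
          have := mr_biUnion_le μ (Finset.univ : Finset (Fin (N+1)))
            (fun n => symmDiff (T n) (L n))
          simpa using this
        have hb3 : ∑ n : Fin (N+1), mr μ (symmDiff (T n) (L n)) < ε/2 := by
          calc ∑ n : Fin (N+1), mr μ (symmDiff (T n) (L n))
              < ∑ _n : Fin (N+1), ε/(2*(N+1)) :=
                Finset.sum_lt_sum_of_nonempty Finset.univ_nonempty fun n _ => hLerr n
            _ = (N+1) * (ε/(2*(N+1))) := by
                rw [Finset.sum_const, Finset.card_univ, Fintype.card_fin]
                push_cast; ring
            _ = ε/2 := by field_simp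
        linarith }
  have h1 : 𝒜 ≤ 𝒮 := by
    refine MeasurableSpace.le_def.mpr fun s hs => ⟨h𝒜 _ hs, fun ε hε => ?_⟩
    refine ⟨s ∩ Set.univ, isRU_rect hs MeasurableSet.univ, ?_⟩
    simp [mr, symmDiff_self, hε]
  have h2 : ℬ ≤ 𝒮 := by
    refine MeasurableSpace.le_def.mpr fun s hs => ⟨hℬ _ hs, fun ε hε => ?_⟩
    refine ⟨Set.univ ∩ s, isRU_rect MeasurableSet.univ hs, ?_⟩
    simp [mr, symmDiff_self, hε]
  exact (MeasurableSpace.le_def.mp (sup_le h1 h2) S hS).2 ε hε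

lemma bsum_le_refine {ι ι' κ : Type*} [Fintype ι] [Fintype ι'] [Fintype κ] [DecidableEq ι]
    (C : ι → Set Ω) (C' : ι' → Set Ω) (D : κ → Set Ω)
    (hC' : ∀ k, MeasurableSet[m] (C' k)) (hD : ∀ j, MeasurableSet[m] (D j))
    (hd : Pairwise (Function.onFun Disjoint C')) (φ : ι' → ι)
    (hCφ : ∀ i, C i = ⋃ k ∈ Finset.univ.filter (fun k => φ k = i), C' k) :
    bsum μ C D ≤ bsum μ C' D := by
  classical
  have hterm : ∀ i j, |mr μ (C i ∩ D j) - mr μ (C i) * mr μ (D j)|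
      ≤ ∑ k ∈ Finset.univ.filter (fun k => φ k = i),
          |mr μ (C' k ∩ D j) - mr μ (C' k) * mr μ (D j)| := by
    intro i j
    have h1 : mr μ (C i ∩ D j)
        = ∑ k ∈ Finset.univ.filter (fun k => φ k = i), mr μ (C' k ∩ D j) := by
      rw [hCφ i, Set.iUnion₂_inter]
      exact mr_biUnion_eq μ _ _ (fun k _ => ((hC' k).inter (hD j)))
        (fun k _ l _ hkl => ((hd hkl).mono Set.inter_subset_left Set.inter_subset_left))
    have h2 : mr μ (C i) = ∑ k ∈ Finset.univ.filter (fun k => φ k = i), mr μ (C' k) := by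
      rw [hCφ i]
      exact mr_biUnion_eq μ _ _ (fun k _ => hC' k) (fun k _ l _ hkl => hd hkl)
    rw [h1, h2, Finset.sum_mul, ← Finset.sum_sub_distrib]
    exact Finset.abs_sum_le_sum_abs _ _
  calc bsum μ C D ≤ ∑ i, ∑ j, ∑ k ∈ Finset.univ.filter (fun k => φ k = i),
        |mr μ (C' k ∩ D j) - mr μ (C' k) * mr μ (D j)| :=
        Finset.sum_le_sum fun i _ => Finset.sum_le_sum fun j _ => hterm i j
    _ = ∑ i, ∑ k ∈ Finset.univ.filter (fun k => φ k = i), ∑ j,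
        |mr μ (C' k ∩ D j) - mr μ (C' k) * mr μ (D j)| :=
        Finset.sum_congr rfl fun i _ => Finset.sum_comm
    _ = bsum μ C' D := Finset.sum_fiberwise _ _ _

lemma bsum_perturb {ι κ : Type*} [Fintype ι] [Fintype κ]
    (C C' : ι → Set Ω) (D D' : κ → Set Ω) :
    bsum μ C D ≤ bsum μ C' D' + ∑ i, ∑ j,
      2 * (mr μ (symmDiff (C i) (C' i)) + mr μ (symmDiff (D j) (D' j))) := by
  rw [bsum, bsum, ← Finset.sum_add_distrib]
  refine Finset.sum_le_sum fun i _ => ?_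
  rw [← Finset.sum_add_distrib]
  refine Finset.sum_le_sum fun j _ => ?_
  set e := mr μ (symmDiff (C i) (C' i)) with he
  set f := mr μ (symmDiff (D j) (D' j)) with hf
  have h1 : |mr μ (C i ∩ D j) - mr μ (C' i ∩ D' j)| ≤ e + f := by
    refine le_trans (abs_mr_sub_le μ _ _) (le_trans (mr_mono μ (symmDiff_inter_subset _ _ _ _))
      (mr_union_le μ _ _))
  have h2 : |mr μ (C i) * mr μ (D j) - mr μ (C' i) * mr μ (D' j)| ≤ e + f := by
    have hx := abs_mr_sub_le μ (C i) (C' i)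
    have hy := abs_mr_sub_le μ (D j) (D' j)
    have key : mr μ (C i) * mr μ (D j) - mr μ (C' i) * mr μ (D' j)
        = (mr μ (C i) - mr μ (C' i)) * mr μ (D j)
          + mr μ (C' i) * (mr μ (D j) - mr μ (D' j)) := by ring
    rw [key]
    calc |(mr μ (C i) - mr μ (C' i)) * mr μ (D j)
          + mr μ (C' i) * (mr μ (D j) - mr μ (D' j))|
        ≤ |(mr μ (C i) - mr μ (C' i))| * |mr μ (D j)|
          + |mr μ (C' i)| * |(mr μ (D j) - mr μ (D' j))| := by
          refine le_trans (abs_add_le _ _) ?_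
          rw [abs_mul, abs_mul]
      _ ≤ e * 1 + 1 * f := by
          have hb1 : |mr μ (D j)| ≤ 1 := by
            rw [abs_of_nonneg (mr_nonneg μ _)]; exact mr_le_one μ _
          have hb2 : |mr μ (C' i)| ≤ 1 := by
            rw [abs_of_nonneg (mr_nonneg μ _)]; exact mr_le_one μ _
          have hm1 := mul_le_mul hx hb1 (abs_nonneg _) ((abs_nonneg _).trans hx)
          have hm2 := mul_le_mul hb2 hy (abs_nonneg _) zero_le_one
          linarith
      _ = e + f := by ring
  have tri : |mr μ (C i ∩ D j) - mr μ (C i) * mr μ (D j)|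
      ≤ |mr μ (C' i ∩ D' j) - mr μ (C' i) * mr μ (D' j)|
        + (|mr μ (C i ∩ D j) - mr μ (C' i ∩ D' j)|
          + |mr μ (C i) * mr μ (D j) - mr μ (C' i) * mr μ (D' j)|) := by
    have habs := abs_sub_abs_le_abs_sub (mr μ (C i ∩ D j) - mr μ (C i) * mr μ (D j))
      (mr μ (C' i ∩ D' j) - mr μ (C' i) * mr μ (D' j))
    have habs2 : |mr μ (C i ∩ D j) - mr μ (C i) * mr μ (D j)
        - (mr μ (C' i ∩ D' j) - mr μ (C' i) * mr μ (D' j))|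
        ≤ |mr μ (C i ∩ D j) - mr μ (C' i ∩ D' j)|
          + |mr μ (C i) * mr μ (D j) - mr μ (C' i) * mr μ (D' j)| := by
      have : mr μ (C i ∩ D j) - mr μ (C i) * mr μ (D j)
          - (mr μ (C' i ∩ D' j) - mr μ (C' i) * mr μ (D' j))
          = (mr μ (C i ∩ D j) - mr μ (C' i ∩ D' j))
            - (mr μ (C i) * mr μ (D j) - mr μ (C' i) * mr μ (D' j)) := by ring
      rw [this]
      exact abs_sub _ _
    linarith
  linarith

lemma measLe {m₁ m₂ : MeasurableSpace Ω} (h : m₁ ≤ m₂) {S : Set Ω}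
    (hS : MeasurableSet[m₁] S) : MeasurableSet[m₂] S := h _ hS

lemma sum_sum_mr_inter {ι κ : Type*} [Fintype ι] [Fintype κ] (C : ι → Set Ω) (D : κ → Set Ω)
    (hCm : ∀ i, MeasurableSet[m] (C i)) (hDm : ∀ j, MeasurableSet[m] (D j))
    (hdC : Pairwise (Function.onFun Disjoint C)) (hdD : Pairwise (Function.onFun Disjoint D))
    (huC : (⋃ i, C i) = Set.univ) (huD : (⋃ j, D j) = Set.univ) :
    ∑ i, ∑ j, mr μ (C i ∩ D j) = 1 := by
  have hrow : ∀ i, ∑ j, mr μ (C i ∩ D j) = mr μ (C i) := by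
    intro i
    have hset : (⋃ j ∈ (Finset.univ : Finset κ), (C i ∩ D j)) = C i := by
      ext x
      simp only [Set.mem_iUnion, Finset.mem_univ, Set.mem_inter_iff, exists_and_left,
        exists_prop, true_and]
      constructor
      · rintro ⟨hx, _⟩; exact hx
      · intro hx
        refine ⟨hx, ?_⟩
        have : x ∈ ⋃ j, D j := by rw [huD]; exact Set.mem_univ x
        exact Set.mem_iUnion.1 this
    calc ∑ j, mr μ (C i ∩ D j)
        = mr μ (⋃ j ∈ (Finset.univ : Finset κ), (C i ∩ D j)) :=
          (mr_biUnion_eq μ _ _ (fun j _ => (hCm i).inter (hDm j))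
            (fun j _ l _ hjl => (hdD hjl).mono Set.inter_subset_right
              Set.inter_subset_right)).symm
      _ = mr μ (C i) := by rw [hset]
  rw [Finset.sum_congr rfl fun i _ => hrow i]
  exact sum_mr_partition μ C hCm hdC huC

lemma zero_mem_betaSet (𝒜 ℬ : MeasurableSpace Ω) : (0:ℝ) ∈ betaSet m 𝒜 ℬ μ := by
  refine ⟨1, 1, fun _ => Set.univ, fun _ => Set.univ, fun _ => MeasurableSet.univ,
    fun _ => MeasurableSet.univ, Subsingleton.pairwise, Subsingleton.pairwise,
    Set.iUnion_const _, Set.iUnion_const _, by simp⟩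

lemma betaSet_le_one {𝒜 ℬ : MeasurableSpace Ω} (h𝒜 : 𝒜 ≤ m) (hℬ : ℬ ≤ m) :
    ∀ x ∈ betaSet m 𝒜 ℬ μ, x ≤ 1 := by
  rintro x ⟨M, N, A, B, hA, hB, hdA, hdB, huA, huB, rfl⟩
  have hAm : ∀ i, MeasurableSet[m] (A i) := fun i => measLe h𝒜 (hA i)
  have hBm : ∀ j, MeasurableSet[m] (B j) := fun j => measLe hℬ (hB j)
  have h1 : ∑ i, ∑ j, |mr μ (A i ∩ B j) - mr μ (A i) * mr μ (B j)| ≤ 2 := by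
    have hb : ∀ i j, |mr μ (A i ∩ B j) - mr μ (A i) * mr μ (B j)|
        ≤ mr μ (A i ∩ B j) + mr μ (A i) * mr μ (B j) := by
      intro i j
      refine le_trans (abs_sub _ _) ?_
      rw [abs_of_nonneg (mr_nonneg μ _),
        abs_of_nonneg (mul_nonneg (mr_nonneg μ _) (mr_nonneg μ _))]
    calc ∑ i, ∑ j, |mr μ (A i ∩ B j) - mr μ (A i) * mr μ (B j)|
        ≤ ∑ i, ∑ j, (mr μ (A i ∩ B j) + mr μ (A i) * mr μ (B j)) :=
          Finset.sum_le_sum fun i _ => Finset.sum_le_sum fun j _ => hb i j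
      _ = (∑ i, ∑ j, mr μ (A i ∩ B j)) + ∑ i, ∑ j, mr μ (A i) * mr μ (B j) := by
          rw [← Finset.sum_add_distrib]
          exact Finset.sum_congr rfl fun i _ => Finset.sum_add_distrib
      _ = 1 + 1 := by
          rw [sum_sum_mr_inter μ A B hAm hBm hdA hdB huA huB]
          rw [← Finset.sum_mul_sum, sum_mr_partition μ A hAm hdA huA,
            sum_mr_partition μ B hBm hdB huB, one_mul]
      _ = 2 := by norm_num
  have hh : (∑ i, ∑ j, |(μ (A i ∩ B j)).toReal - (μ (A i)).toReal * (μ (B j)).toReal|)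
      = ∑ i, ∑ j, |mr μ (A i ∩ B j) - mr μ (A i) * mr μ (B j)| := rfl
  rw [hh]
  linarith

lemma betaSet_bddAbove {𝒜 ℬ : MeasurableSpace Ω} (h𝒜 : 𝒜 ≤ m) (hℬ : ℬ ≤ m) :
    BddAbove (betaSet m 𝒜 ℬ μ) :=
  ⟨1, fun _ hx => betaSet_le_one μ h𝒜 hℬ _ hx⟩

lemma betaMix_nonneg {𝒜 ℬ : MeasurableSpace Ω} (h𝒜 : 𝒜 ≤ m) (hℬ : ℬ ≤ m) :
    0 ≤ betaMix m 𝒜 ℬ μ :=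
  le_csSup (betaSet_bddAbove μ h𝒜 hℬ) (zero_mem_betaSet μ 𝒜 ℬ)

lemma half_bsum_mem_betaSet {𝒜 ℬ : MeasurableSpace Ω} {σ σ' : Type*} [Fintype σ] [Fintype σ']
    (a : σ → Set Ω) (a' : σ' → Set Ω)
    (ha : ∀ s, MeasurableSet[𝒜] (a s)) (ha' : ∀ u, MeasurableSet[ℬ] (a' u))
    (hda : Pairwise (Function.onFun Disjoint a)) (hda' : Pairwise (Function.onFun Disjoint a'))
    (hua : (⋃ s, a s) = Set.univ) (hua' : (⋃ u, a' u) = Set.univ) :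
    (1/2) * (∑ s, ∑ u, |mr μ (a s ∩ a' u) - mr μ (a s) * mr μ (a' u)|)
      ∈ betaSet m 𝒜 ℬ μ := by
  classical
  let e := Fintype.equivFin σ
  let e' := Fintype.equivFin σ'
  refine ⟨Fintype.card σ, Fintype.card σ', fun i => a (e.symm i), fun j => a' (e'.symm j),
    fun i => ha _, fun j => ha' _,
    fun i j hij => hda (fun h => hij (e.symm.injective h)),
    fun i j hij => hda' (fun h => hij (e'.symm.injective h)), ?_, ?_, ?_⟩
  · rw [e.symm.surjective.iUnion_comp a]; exact hua
  · rw [e'.symm.surjective.iUnion_comp a']; exact hua'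
  · congr 1
    rw [← Equiv.sum_comp e.symm (fun s => ∑ u, |mr μ (a s ∩ a' u) - mr μ (a s) * mr μ (a' u)|)]
    exact Finset.sum_congr rfl fun i _ =>
      (Equiv.sum_comp e'.symm fun u =>
        |mr μ (a (e.symm i) ∩ a' u) - mr μ (a (e.symm i)) * mr μ (a' u)|).symm

lemma sum4 {σ τ σ' τ' : Type*} [Fintype σ] [Fintype τ] [Fintype σ'] [Fintype τ']
    (E : σ → σ' → ℝ) (Y : τ → τ' → ℝ) :
    ∑ s, ∑ t, ∑ u, ∑ v, E s u * Y t v = (∑ s, ∑ u, E s u) * (∑ t, ∑ v, Y t v) := by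
  calc ∑ s, ∑ t, ∑ u, ∑ v, E s u * Y t v
      = ∑ s, ∑ t, (∑ u, E s u) * (∑ v, Y t v) :=
        Finset.sum_congr rfl fun s _ => Finset.sum_congr rfl fun t _ =>
          (Finset.sum_mul_sum _ _ _ _).symm
    _ = (∑ s, ∑ u, E s u) * (∑ t, ∑ v, Y t v) := (Finset.sum_mul_sum _ _ _ _).symm

lemma grid_bound {σ τ σ' τ' : Type*} [Fintype σ] [Fintype τ] [Fintype σ'] [Fintype τ']
    (𝒜₁ 𝒜₂ ℬ₁ ℬ₂ : MeasurableSpace Ω)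
    (h𝒜₁ : 𝒜₁ ≤ m) (h𝒜₂ : 𝒜₂ ≤ m) (hℬ₁ : ℬ₁ ≤ m) (hℬ₂ : ℬ₂ ≤ m)
    (hindep : ProbabilityTheory.Indep (𝒜₁ ⊔ 𝒜₂) (ℬ₁ ⊔ ℬ₂) μ)
    (a : σ → Set Ω) (b : τ → Set Ω) (a' : σ' → Set Ω) (b' : τ' → Set Ω)
    (ha : ∀ s, MeasurableSet[𝒜₁] (a s)) (hb : ∀ t, MeasurableSet[ℬ₁] (b t))
    (ha' : ∀ u, MeasurableSet[𝒜₂] (a' u)) (hb' : ∀ v, MeasurableSet[ℬ₂] (b' v))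
    (hda : Pairwise (Function.onFun Disjoint a)) (hdb : Pairwise (Function.onFun Disjoint b))
    (hda' : Pairwise (Function.onFun Disjoint a')) (hdb' : Pairwise (Function.onFun Disjoint b'))
    (hua : (⋃ s, a s) = Set.univ) (hub : (⋃ t, b t) = Set.univ)
    (hua' : (⋃ u, a' u) = Set.univ) (hub' : (⋃ v, b' v) = Set.univ) :
    bsum μ (fun p : σ × τ => a p.1 ∩ b p.2) (fun q : σ' × τ' => a' q.1 ∩ b' q.2)
      ≤ 2 * betaMix m 𝒜₁ 𝒜₂ μ + 2 * betaMix m ℬ₁ ℬ₂ μ := by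
  have hI : ∀ X Y, MeasurableSet[𝒜₁ ⊔ 𝒜₂] X → MeasurableSet[ℬ₁ ⊔ ℬ₂] Y →
      mr μ (X ∩ Y) = mr μ X * mr μ Y := by
    intro X Y hX hY
    have h := ((ProbabilityTheory.indep_iff_forall_indepSet μ).mp hindep
      X Y hX hY).measure_inter_eq_mul
    rw [mr, mr, mr, h, ENNReal.toReal_mul]
  have hterm : ∀ (p : σ × τ) (q : σ' × τ'),
      |mr μ ((a p.1 ∩ b p.2) ∩ (a' q.1 ∩ b' q.2))
        - mr μ (a p.1 ∩ b p.2) * mr μ (a' q.1 ∩ b' q.2)|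
      ≤ |mr μ (a p.1 ∩ a' q.1) - mr μ (a p.1) * mr μ (a' q.1)| * mr μ (b p.2 ∩ b' q.2)
        + (mr μ (a p.1) * mr μ (a' q.1))
          * |mr μ (b p.2 ∩ b' q.2) - mr μ (b p.2) * mr μ (b' q.2)| := by
    intro p q
    have hX : mr μ ((a p.1 ∩ b p.2) ∩ (a' q.1 ∩ b' q.2))
        = mr μ (a p.1 ∩ a' q.1) * mr μ (b p.2 ∩ b' q.2) := by
      rw [Set.inter_inter_inter_comm]
      exact hI _ _ ((measLe le_sup_left (ha p.1)).inter (measLe le_sup_right (ha' q.1)))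
        ((measLe le_sup_left (hb p.2)).inter (measLe le_sup_right (hb' q.2)))
    have hP : mr μ (a p.1 ∩ b p.2) = mr μ (a p.1) * mr μ (b p.2) :=
      hI _ _ (measLe le_sup_left (ha p.1)) (measLe le_sup_left (hb p.2))
    have hQ : mr μ (a' q.1 ∩ b' q.2) = mr μ (a' q.1) * mr μ (b' q.2) :=
      hI _ _ (measLe le_sup_right (ha' q.1)) (measLe le_sup_right (hb' q.2))
    set X := mr μ (a p.1 ∩ a' q.1)
    set Y := mr μ (b p.2 ∩ b' q.2)
    set P := mr μ (a p.1) * mr μ (a' q.1) with hPdef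
    set Q := mr μ (b p.2) * mr μ (b' q.2) with hQdef
    have hprod : mr μ (a p.1 ∩ b p.2) * mr μ (a' q.1 ∩ b' q.2) = P * Q := by
      rw [hP, hQ, hPdef, hQdef]; ring
    rw [hX, hprod]
    have hkey : X * Y - P * Q = (X - P) * Y + P * (Y - Q) := by ring
    rw [hkey]
    calc |(X - P) * Y + P * (Y - Q)| ≤ |(X - P) * Y| + |P * (Y - Q)| := abs_add_le _ _
      _ = |X - P| * |Y| + |P| * |Y - Q| := by rw [abs_mul, abs_mul]
      _ = |X - P| * Y + P * |Y - Q| := by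
          rw [abs_of_nonneg (mr_nonneg μ _),
            abs_of_nonneg (mul_nonneg (mr_nonneg μ _) (mr_nonneg μ _))]
  have hbig : bsum μ (fun p : σ × τ => a p.1 ∩ b p.2) (fun q : σ' × τ' => a' q.1 ∩ b' q.2)
      ≤ (∑ s, ∑ u, |mr μ (a s ∩ a' u) - mr μ (a s) * mr μ (a' u)|)
          * (∑ t, ∑ v, mr μ (b t ∩ b' v))
        + (∑ s, ∑ u, mr μ (a s) * mr μ (a' u))
          * (∑ t, ∑ v, |mr μ (b t ∩ b' v) - mr μ (b t) * mr μ (b' v)|) := by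
    calc bsum μ (fun p : σ × τ => a p.1 ∩ b p.2) (fun q : σ' × τ' => a' q.1 ∩ b' q.2)
        ≤ ∑ p : σ × τ, ∑ q : σ' × τ',
            (|mr μ (a p.1 ∩ a' q.1) - mr μ (a p.1) * mr μ (a' q.1)| * mr μ (b p.2 ∩ b' q.2)
              + (mr μ (a p.1) * mr μ (a' q.1))
                * |mr μ (b p.2 ∩ b' q.2) - mr μ (b p.2) * mr μ (b' q.2)|) :=
          Finset.sum_le_sum fun p _ => Finset.sum_le_sum fun q _ => hterm p q
      _ = ∑ s, ∑ t, ∑ u, ∑ v,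
            (|mr μ (a s ∩ a' u) - mr μ (a s) * mr μ (a' u)| * mr μ (b t ∩ b' v)
              + (mr μ (a s) * mr μ (a' u))
                * |mr μ (b t ∩ b' v) - mr μ (b t) * mr μ (b' v)|) := by
          rw [Fintype.sum_prod_type]
          exact Finset.sum_congr rfl fun s _ => Finset.sum_congr rfl fun t _ =>
            Fintype.sum_prod_type _
      _ = (∑ s, ∑ t, ∑ u, ∑ v,
            |mr μ (a s ∩ a' u) - mr μ (a s) * mr μ (a' u)| * mr μ (b t ∩ b' v))
          + ∑ s, ∑ t, ∑ u, ∑ v,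
            (mr μ (a s) * mr μ (a' u))
              * |mr μ (b t ∩ b' v) - mr μ (b t) * mr μ (b' v)| := by
          rw [← Finset.sum_add_distrib]
          refine Finset.sum_congr rfl fun s _ => ?_
          rw [← Finset.sum_add_distrib]
          refine Finset.sum_congr rfl fun t _ => ?_
          rw [← Finset.sum_add_distrib]
          refine Finset.sum_congr rfl fun u _ => ?_
          rw [← Finset.sum_add_distrib]
      _ = _ := by
          rw [sum4 (fun s u => |mr μ (a s ∩ a' u) - mr μ (a s) * mr μ (a' u)|)
            (fun t v => mr μ (b t ∩ b' v)),
            sum4 (fun s u => mr μ (a s) * mr μ (a' u))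
            (fun t v => |mr μ (b t ∩ b' v) - mr μ (b t) * mr μ (b' v)|)]
  have hYsum : (∑ t, ∑ v, mr μ (b t ∩ b' v)) = 1 :=
    sum_sum_mr_inter μ b b' (fun t => measLe hℬ₁ (hb t)) (fun v => measLe hℬ₂ (hb' v))
      hdb hdb' hub hub'
  have hPsum : (∑ s, ∑ u, mr μ (a s) * mr μ (a' u)) = 1 := by
    rw [← Finset.sum_mul_sum, sum_mr_partition μ a (fun s => measLe h𝒜₁ (ha s)) hda hua,
      sum_mr_partition μ a' (fun u => measLe h𝒜₂ (ha' u)) hda' hua', one_mul]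
  have hE : (∑ s, ∑ u, |mr μ (a s ∩ a' u) - mr μ (a s) * mr μ (a' u)|)
      ≤ 2 * betaMix m 𝒜₁ 𝒜₂ μ := by
    have hmem := half_bsum_mem_betaSet μ a a' ha ha' hda hda' hua hua'
    have hle := le_csSup (betaSet_bddAbove μ h𝒜₁ h𝒜₂) hmem
    rw [betaMix] at *
    linarith
  have hF : (∑ t, ∑ v, |mr μ (b t ∩ b' v) - mr μ (b t) * mr μ (b' v)|)
      ≤ 2 * betaMix m ℬ₁ ℬ₂ μ := by
    have hmem := half_bsum_mem_betaSet μ b b' hb hb' hdb hdb' hub hub'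
    have hle := le_csSup (betaSet_bddAbove μ hℬ₁ hℬ₂) hmem
    rw [betaMix] at *
    linarith
  have hEnn : 0 ≤ ∑ s, ∑ u, |mr μ (a s ∩ a' u) - mr μ (a s) * mr μ (a' u)| :=
    Finset.sum_nonneg fun s _ => Finset.sum_nonneg fun u _ => abs_nonneg _
  have hFnn : 0 ≤ ∑ t, ∑ v, |mr μ (b t ∩ b' v) - mr μ (b t) * mr μ (b' v)| :=
    Finset.sum_nonneg fun t _ => Finset.sum_nonneg fun v _ => abs_nonneg _
  rw [hYsum, hPsum] at hbig
  linarith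

lemma cell_pairwise_disjoint {σ τ : Type*} (a : σ → Set Ω) (b : τ → Set Ω)
    (hda : Pairwise (Function.onFun Disjoint a)) (hdb : Pairwise (Function.onFun Disjoint b)) :
    Pairwise (Function.onFun Disjoint (fun c : σ × τ => a c.1 ∩ b c.2)) := by
  intro c c' hne
  have h : c.1 ≠ c'.1 ∨ c.2 ≠ c'.2 := by
    by_contra h
    push_neg at h
    exact hne (Prod.ext h.1 h.2)
  rcases h with h | h
  · exact (hda h).mono Set.inter_subset_left Set.inter_subset_left
  · exact (hdb h).mono Set.inter_subset_right Set.inter_subset_right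

lemma atom_rect_subset {ιg κ : Type*} (GA GB : ιg → Set Ω) (e1 e2 : κ → ιg)
    (f g : ιg → Bool) :
    (atom GA f ∩ atom GB g) ⊆ (⋃ k, GA (e1 k) ∩ GB (e2 k)) ∨
    (atom GA f ∩ atom GB g) ∩ (⋃ k, GA (e1 k) ∩ GB (e2 k)) = ∅ := by
  by_cases hne : ((atom GA f ∩ atom GB g) ∩ ⋃ k, GA (e1 k) ∩ GB (e2 k)).Nonempty
  · left
    obtain ⟨x, hx, hxL⟩ := hne
    obtain ⟨k, hk⟩ := Set.mem_iUnion.1 hxL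
    intro y hy
    refine Set.mem_iUnion.2 ⟨k, ?_, ?_⟩
    · exact (hy.1 (e1 k)).2 ((hx.1 (e1 k)).1 hk.1)
    · exact (hy.2 (e2 k)).2 ((hx.2 (e2 k)).1 hk.2)
  · right
    exact Set.not_nonempty_iff_eq_empty.1 hne

lemma approx_partition {𝒜 ℬ : MeasurableSpace Ω} (h𝒜 : 𝒜 ≤ m) (hℬ : ℬ ≤ m)
    {M : ℕ} (C : Fin M → Set Ω) (hCme : ∀ i, MeasurableSet[𝒜 ⊔ ℬ] (C i))
    (hdC : Pairwise (Function.onFun Disjoint C)) (huC : (⋃ i, C i) = Set.univ)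
    {ε : ℝ} (hε : 0 < ε) :
    ∃ (σ : Type) (_ : Fintype σ) (τ : Type) (_ : Fintype τ)
      (a : σ → Set Ω) (b : τ → Set Ω) (Chat : Fin M → Set Ω) (ψ : σ × τ → Fin M),
      (∀ s, MeasurableSet[𝒜] (a s)) ∧ (∀ t, MeasurableSet[ℬ] (b t)) ∧
      Pairwise (Function.onFun Disjoint a) ∧ Pairwise (Function.onFun Disjoint b) ∧
      (⋃ s, a s) = Set.univ ∧ (⋃ t, b t) = Set.univ ∧
      (∀ i, Chat i = ⋃ c ∈ Finset.univ.filter (fun c => ψ c = i), a c.1 ∩ b c.2) ∧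
      (∀ i, mr μ (symmDiff (C i) (Chat i)) ≤ M * ε) := by
  classical
  have hΩ : (Set.univ : Set Ω).Nonempty := by
    by_contra h
    rw [Set.not_nonempty_iff_eq_empty] at h
    have h1 : μ Set.univ = 1 := measure_univ
    rw [h, measure_empty] at h1
    exact zero_ne_one h1
  obtain ⟨x0, _⟩ := hΩ
  have hMne : Nonempty (Fin M) := by
    have hx : x0 ∈ ⋃ i, C i := by rw [huC]; exact Set.mem_univ x0
    obtain ⟨i, _⟩ := Set.mem_iUnion.1 hx
    exact ⟨i⟩
  obtain ⟨i0⟩ := hMne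
  choose L hLRU hLerr using fun i : Fin M => approx μ 𝒜 ℬ h𝒜 hℬ (C i) (hCme i) hε
  choose ι ιinst A B hA hB hLeq using hLRU
  letI : ∀ i, Fintype (ι i) := ιinst
  have hcellL : ∀ (c : ((Σ i, ι i) → Bool) × ((Σ i, ι i) → Bool)) (i : Fin M),
      (atom (fun p : Σ i, ι i => A p.1 p.2) c.1 ∩ atom (fun p : Σ i, ι i => B p.1 p.2) c.2)
        ⊆ L i ∨
      (atom (fun p : Σ i, ι i => A p.1 p.2) c.1 ∩ atom (fun p : Σ i, ι i => B p.1 p.2) c.2)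
        ∩ L i = ∅ := by
    intro c i
    rw [hLeq i]
    exact atom_rect_subset (fun p : Σ i, ι i => A p.1 p.2) (fun p : Σ i, ι i => B p.1 p.2)
      (fun k : ι i => (⟨i, k⟩ : Σ i, ι i)) (fun k : ι i => (⟨i, k⟩ : Σ i, ι i)) c.1 c.2
  have hψex : ∀ c : ((Σ i, ι i) → Bool) × ((Σ i, ι i) → Bool), ∃ l : Fin M,
      ((∃ l', (atom (fun p : Σ i, ι i => A p.1 p.2) c.1
          ∩ atom (fun p : Σ i, ι i => B p.1 p.2) c.2) ⊆ L l') →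
        (atom (fun p : Σ i, ι i => A p.1 p.2) c.1
          ∩ atom (fun p : Σ i, ι i => B p.1 p.2) c.2) ⊆ L l) := by
    intro c
    by_cases h : ∃ l', (atom (fun p : Σ i, ι i => A p.1 p.2) c.1
        ∩ atom (fun p : Σ i, ι i => B p.1 p.2) c.2) ⊆ L l'
    · exact ⟨h.choose, fun _ => h.choose_spec⟩
    · exact ⟨i0, fun h' => absurd h' h⟩
  choose ψ hψ using hψex
  refine ⟨((Σ i, ι i) → Bool), inferInstance, ((Σ i, ι i) → Bool), inferInstance,
    atom (fun p : Σ i, ι i => A p.1 p.2), atom (fun p : Σ i, ι i => B p.1 p.2),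
    fun i => ⋃ c ∈ Finset.univ.filter (fun c => ψ c = i),
      (atom (fun p : Σ i, ι i => A p.1 p.2) c.1 ∩ atom (fun p : Σ i, ι i => B p.1 p.2) c.2),
    ψ,
    fun f => atom_measurable (fun p => hA p.1 p.2) f,
    fun g => atom_measurable (fun p => hB p.1 p.2) g,
    atom_disjoint _, atom_disjoint _, atom_cover _, atom_cover _,
    fun i => rfl, fun i => ?_⟩
  have hcelld := cell_pairwise_disjoint (atom (fun p : Σ i, ι i => A p.1 p.2))
    (atom (fun p : Σ i, ι i => B p.1 p.2)) (atom_disjoint _) (atom_disjoint _)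
  have hsubsd : symmDiff (C i)
      (⋃ c ∈ Finset.univ.filter (fun c => ψ c = i),
        (atom (fun p : Σ i, ι i => A p.1 p.2) c.1
          ∩ atom (fun p : Σ i, ι i => B p.1 p.2) c.2))
      ⊆ ⋃ l, symmDiff (C l) (L l) := by
    intro x hx
    have hxcell : ∃ c : ((Σ i, ι i) → Bool) × ((Σ i, ι i) → Bool),
        x ∈ atom (fun p : Σ i, ι i => A p.1 p.2) c.1
          ∩ atom (fun p : Σ i, ι i => B p.1 p.2) c.2 := by
      have h1 : x ∈ ⋃ f, atom (fun p : Σ i, ι i => A p.1 p.2) f := by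
        rw [atom_cover]; exact Set.mem_univ x
      have h2 : x ∈ ⋃ g, atom (fun p : Σ i, ι i => B p.1 p.2) g := by
        rw [atom_cover]; exact Set.mem_univ x
      obtain ⟨f, hf⟩ := Set.mem_iUnion.1 h1
      obtain ⟨g, hg⟩ := Set.mem_iUnion.1 h2
      exact ⟨(f, g), hf, hg⟩
    obtain ⟨c, hc⟩ := hxcell
    have hmemhat : ∀ l : Fin M,
        (x ∈ ⋃ c' ∈ Finset.univ.filter (fun c' => ψ c' = l),
          (atom (fun p : Σ i, ι i => A p.1 p.2) c'.1
            ∩ atom (fun p : Σ i, ι i => B p.1 p.2) c'.2)) ↔ ψ c = l := by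
      intro l
      constructor
      · intro hxl
        obtain ⟨c', hc'mem, hc'⟩ := Set.mem_iUnion₂.1 hxl
        have hψc' : ψ c' = l := (Finset.mem_filter.1 hc'mem).2
        have hcc : c' = c := by
          by_contra hne
          exact Set.disjoint_left.1 (hcelld hne) hc' hc
        rw [← hcc]
        exact hψc'
      · intro hψc
        exact Set.mem_iUnion₂.2 ⟨c, Finset.mem_filter.2 ⟨Finset.mem_univ c, hψc⟩, hc⟩
    rw [Set.mem_symmDiff] at hx
    rcases hx with ⟨hxC, hxhat⟩ | ⟨hxhat, hxC⟩
    · have hψne : ψ c ≠ i := fun h => hxhat ((hmemhat i).2 h)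
      by_cases hex : ∃ l, (atom (fun p : Σ i, ι i => A p.1 p.2) c.1
          ∩ atom (fun p : Σ i, ι i => B p.1 p.2) c.2) ⊆ L l
      · refine Set.mem_iUnion.2 ⟨ψ c, ?_⟩
        rw [Set.mem_symmDiff]
        exact Or.inr ⟨hψ c hex hc, fun hxl => Set.disjoint_left.1 (hdC hψne) hxl hxC⟩
      · have hdisj : (atom (fun p : Σ i, ι i => A p.1 p.2) c.1
            ∩ atom (fun p : Σ i, ι i => B p.1 p.2) c.2) ∩ L i = ∅ := by
          rcases hcellL c i with h | h
          · exact absurd ⟨i, h⟩ hex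
          · exact h
        refine Set.mem_iUnion.2 ⟨i, ?_⟩
        rw [Set.mem_symmDiff]
        refine Or.inl ⟨hxC, fun hxL => ?_⟩
        have : x ∈ (atom (fun p : Σ i, ι i => A p.1 p.2) c.1
            ∩ atom (fun p : Σ i, ι i => B p.1 p.2) c.2) ∩ L i := ⟨hc, hxL⟩
        rw [hdisj] at this
        exact this
    · have hψc : ψ c = i := (hmemhat i).1 hxhat
      by_cases hex : ∃ l, (atom (fun p : Σ i, ι i => A p.1 p.2) c.1
          ∩ atom (fun p : Σ i, ι i => B p.1 p.2) c.2) ⊆ L l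
      · refine Set.mem_iUnion.2 ⟨i, ?_⟩
        rw [Set.mem_symmDiff]
        refine Or.inr ⟨?_, hxC⟩
        have := hψ c hex hc
        rwa [hψc] at this
      · have hxCl : ∃ l, x ∈ C l := by
          have : x ∈ ⋃ l, C l := by rw [huC]; exact Set.mem_univ x
          exact Set.mem_iUnion.1 this
        obtain ⟨l, hl⟩ := hxCl
        have hdisj : (atom (fun p : Σ i, ι i => A p.1 p.2) c.1
            ∩ atom (fun p : Σ i, ι i => B p.1 p.2) c.2) ∩ L l = ∅ := by
          rcases hcellL c l with h | h
          · exact absurd ⟨l, h⟩ hex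
          · exact h
        refine Set.mem_iUnion.2 ⟨l, ?_⟩
        rw [Set.mem_symmDiff]
        refine Or.inl ⟨hl, fun hxL => ?_⟩
        have : x ∈ (atom (fun p : Σ i, ι i => A p.1 p.2) c.1
            ∩ atom (fun p : Σ i, ι i => B p.1 p.2) c.2) ∩ L l := ⟨hc, hxL⟩
        rw [hdisj] at this
        exact this
  calc mr μ (symmDiff (C i) _) ≤ mr μ (⋃ l, symmDiff (C l) (L l)) := mr_mono μ hsubsd
    _ ≤ ∑ l, mr μ (symmDiff (C l) (L l)) := by
        simpa using mr_biUnion_le μ Finset.univ (fun l => symmDiff (C l) (L l))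
    _ ≤ ∑ _l : Fin M, ε := Finset.sum_le_sum fun l _ => (hLerr l).le
    _ = M * ε := by
        rw [Finset.sum_const, Finset.card_univ, Fintype.card_fin, nsmul_eq_mul]

end BetaAux

/-- If `σ(𝒜₁ ∪ 𝒜₂)` is independent of `σ(ℬ₁ ∪ ℬ₂)`, then
`β(𝒜₁ ⊔ ℬ₁, 𝒜₂ ⊔ ℬ₂) ≤ β(𝒜₁, 𝒜₂) + β(ℬ₁, ℬ₂)`. -/
theorem stmt6 {Ω : Type*} [m : MeasurableSpace Ω] (μ : Measure Ω)
    [IsProbabilityMeasure μ] (𝒜₁ 𝒜₂ ℬ₁ ℬ₂ : MeasurableSpace Ω)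
    (h𝒜₁ : 𝒜₁ ≤ m) (h𝒜₂ : 𝒜₂ ≤ m) (hℬ₁ : ℬ₁ ≤ m) (hℬ₂ : ℬ₂ ≤ m)
    (hindep : ProbabilityTheory.Indep (𝒜₁ ⊔ 𝒜₂) (ℬ₁ ⊔ ℬ₂) μ) :
    betaMix m (𝒜₁ ⊔ ℬ₁) (𝒜₂ ⊔ ℬ₂) μ ≤ betaMix m 𝒜₁ 𝒜₂ μ + betaMix m ℬ₁ ℬ₂ μ := by
  classical
  rw [betaMix]
  refine Real.sSup_le ?_ (add_nonneg (BetaAux.betaMix_nonneg μ h𝒜₁ h𝒜₂)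
    (BetaAux.betaMix_nonneg μ hℬ₁ hℬ₂))
  rintro x ⟨M, N, C, D, hC, hD, hdC, hdD, huC, huD, rfl⟩
  refine le_of_forall_pos_le_add fun δ hδ => ?_
  set K : ℝ := (M : ℝ) * N * (M + N) with hK
  have hKnn : (0:ℝ) ≤ K := by positivity
  have hε : (0:ℝ) < δ / (K + 1) := by positivity
  obtain ⟨σ1, _, τ1, _, a, b, Chat, ψ, ham, hbm, had, hbd, hau, hbu, hChat, hCerr⟩ :=
    BetaAux.approx_partition μ h𝒜₁ hℬ₁ C hC hdC huC hε
  obtain ⟨σ2, _, τ2, _, a', b', Dhat, ψ', ham', hbm', had', hbd', hau', hbu', hDhat, hDerr⟩ :=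
    BetaAux.approx_partition μ h𝒜₂ hℬ₂ D hD hdD huD hε
  have hcellm : ∀ c : σ1 × τ1, MeasurableSet[m] (a c.1 ∩ b c.2) :=
    fun c => (BetaAux.measLe h𝒜₁ (ham c.1)).inter (BetaAux.measLe hℬ₁ (hbm c.2))
  have hcellm' : ∀ c : σ2 × τ2, MeasurableSet[m] (a' c.1 ∩ b' c.2) :=
    fun c => (BetaAux.measLe h𝒜₂ (ham' c.1)).inter (BetaAux.measLe hℬ₂ (hbm' c.2))
  have hcelld := BetaAux.cell_pairwise_disjoint a b had hbd
  have hcelld' := BetaAux.cell_pairwise_disjoint a' b' had' hbd'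
  have hDhatm : ∀ j, MeasurableSet[m] (Dhat j) := fun j => by
    rw [hDhat j]
    exact Finset.measurableSet_biUnion _ fun c _ => hcellm' c
  have h1 : BetaAux.bsum μ C D ≤ BetaAux.bsum μ Chat Dhat
      + ∑ i : Fin M, ∑ j : Fin N, 2 * (BetaAux.mr μ (symmDiff (C i) (Chat i))
        + BetaAux.mr μ (symmDiff (D j) (Dhat j))) := BetaAux.bsum_perturb μ C Chat D Dhat
  have h2 : BetaAux.bsum μ Chat Dhat
      ≤ BetaAux.bsum μ (fun c : σ1 × τ1 => a c.1 ∩ b c.2) Dhat :=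
    BetaAux.bsum_le_refine μ Chat _ Dhat hcellm hDhatm hcelld ψ hChat
  have h3 : BetaAux.bsum μ (fun c : σ1 × τ1 => a c.1 ∩ b c.2) Dhat
      ≤ BetaAux.bsum μ (fun c : σ1 × τ1 => a c.1 ∩ b c.2)
          (fun c : σ2 × τ2 => a' c.1 ∩ b' c.2) := by
    rw [BetaAux.bsum_comm μ _ Dhat,
      BetaAux.bsum_comm μ _ (fun c : σ2 × τ2 => a' c.1 ∩ b' c.2)]
    exact BetaAux.bsum_le_refine μ Dhat _ _ hcellm' hcellm hcelld' ψ' hDhat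
  have h4 := BetaAux.grid_bound μ 𝒜₁ 𝒜₂ ℬ₁ ℬ₂ h𝒜₁ h𝒜₂ hℬ₁ hℬ₂ hindep a b a' b'
    ham hbm ham' hbm' had hbd had' hbd' hau hbu hau' hbu'
  have herr : ∑ i : Fin M, ∑ j : Fin N, 2 * (BetaAux.mr μ (symmDiff (C i) (Chat i))
      + BetaAux.mr μ (symmDiff (D j) (Dhat j))) ≤ 2 * (K * (δ / (K + 1))) := by
    calc ∑ i : Fin M, ∑ j : Fin N, 2 * (BetaAux.mr μ (symmDiff (C i) (Chat i))
        + BetaAux.mr μ (symmDiff (D j) (Dhat j)))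
        ≤ ∑ _i : Fin M, ∑ _j : Fin N,
            2 * ((M : ℝ) * (δ / (K + 1)) + (N : ℝ) * (δ / (K + 1))) :=
          Finset.sum_le_sum fun i _ => Finset.sum_le_sum fun j _ => by
            have hci := hCerr i
            have hdj := hDerr j
            linarith
      _ = (M : ℝ) * ((N : ℝ) * (2 * ((M : ℝ) * (δ / (K + 1))
            + (N : ℝ) * (δ / (K + 1))))) := by
          simp [Finset.sum_const, Finset.card_univ, nsmul_eq_mul]
      _ = 2 * (K * (δ / (K + 1))) := by rw [hK]; ring
  have hKle : K * (δ / (K + 1)) ≤ δ := by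
    have hpos : (0:ℝ) < K + 1 := by positivity
    rw [← mul_div_assoc, div_le_iff₀ hpos]
    nlinarith
  have hxeq : (1/2 : ℝ) * ∑ i, ∑ j,
      |(μ (C i ∩ D j)).toReal - (μ (C i)).toReal * (μ (D j)).toReal|
      = (1/2 : ℝ) * BetaAux.bsum μ C D := rfl
  rw [hxeq]
  linarith
end

section
/- If g is measurable (not necessarily integrable) and T is measure preserving, then for any sequence a_n → ∞ of positive reals, a_n^{-1} S_n(g − g∘T) converges to 0 in probability (in measure), where S_n(f) = Σ_{j=0}^{n−1} f∘T^j. -/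
open MeasureTheory Filter

private lemma tendstoInMeasure_sub_zero {Ω : Type*} [MeasurableSpace Ω] {μ : Measure Ω}
    {f h : ℕ → Ω → ℝ}
    (hf : TendstoInMeasure μ f atTop (fun _ => (0 : ℝ)))
    (hh : TendstoInMeasure μ h atTop (fun _ => (0 : ℝ))) :
    TendstoInMeasure μ (fun n ω => f n ω - h n ω) atTop (fun _ => (0 : ℝ)) := by
  intro ε hε
  have hf' := hf (ε / 2) (ENNReal.half_pos hε.ne')
  have hh' := hh (ε / 2) (ENNReal.half_pos hε.ne')
  have hsum := hf'.add hh'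
  rw [add_zero] at hsum
  refine tendsto_of_tendsto_of_tendsto_of_le_of_le tendsto_const_nhds hsum
    (fun n => zero_le) (fun n => ?_)
  refine le_trans (measure_mono ?_) (measure_union_le _ _)
  intro x hx
  simp only [Set.mem_setOf_eq, Real.dist_eq, sub_zero, Set.mem_union] at hx ⊢
  by_contra hc
  push_neg at hc
  have h1 := hc.1
  have h2 := hc.2
  have := abs_sub (f n x) (h n x)
  have : |f n x - h n x| ≤ |f n x| + |h n x| := abs_sub _ _
  have htri : edist (f n x - h n x) 0 ≤ edist (f n x) 0 + edist (h n x) 0 := by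
    rw [edist_dist, edist_dist, edist_dist, Real.dist_eq, Real.dist_eq, Real.dist_eq,
      sub_zero, sub_zero, sub_zero, ← ENNReal.ofReal_add (abs_nonneg _) (abs_nonneg _)]
    exact ENNReal.ofReal_le_ofReal (abs_sub _ _)
  have hlt := ENNReal.add_lt_add h1 h2
  rw [ENNReal.add_halves] at hlt
  exact absurd (lt_of_le_of_lt (le_trans hx htri) hlt) (lt_irrefl _)

/-- If `T` is measure preserving, `g` measurable, and `a_n → ∞` with `a_n > 0`, then
`a_n⁻¹ S_n(g - g∘T) → 0` in probability. -/
theorem stmt8 {Ω : Type*} [MeasurableSpace Ω] (μ : Measure Ω) [IsProbabilityMeasure μ]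
    (T : Ω → Ω) (hT : MeasurePreserving T μ μ) (g : Ω → ℝ) (hg : Measurable g)
    (a : ℕ → ℝ) (ha : ∀ n, 0 < a n) (ha' : Tendsto a atTop atTop) :
    TendstoInMeasure μ
      (fun n ω => (a n)⁻¹ * ∑ j ∈ Finset.range n, (g (T^[j] ω) - g (T (T^[j] ω))))
      atTop (fun _ => (0 : ℝ)) := by
  have key : ∀ n ω, (a n)⁻¹ * ∑ j ∈ Finset.range n, (g (T^[j] ω) - g (T (T^[j] ω)))
      = (a n)⁻¹ * g ω - (a n)⁻¹ * g (T^[n] ω) := by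
    intro n ω
    have : ∑ j ∈ Finset.range n, (g (T^[j] ω) - g (T (T^[j] ω)))
        = g (T^[0] ω) - g (T^[n] ω) := by
      rw [← Finset.sum_range_sub' (fun j => g (T^[j] ω)) n]
      refine Finset.sum_congr rfl fun j _ => ?_
      rw [Function.iterate_succ_apply']
    rw [this, Function.iterate_zero_apply, mul_sub]
  -- first sequence tends to 0 in measure
  have h1 : TendstoInMeasure μ (fun n ω => (a n)⁻¹ * g ω) atTop (fun _ => (0 : ℝ)) := by
    apply tendstoInMeasure_of_tendsto_ae
      (fun n => (hg.const_mul _).aestronglyMeasurable)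
    filter_upwards with ω
    have := (ha'.inv_tendsto_atTop).mul_const (g ω)
    simpa using this
  have h2 : TendstoInMeasure μ (fun n ω => (a n)⁻¹ * g (T^[n] ω)) atTop
      (fun _ => (0 : ℝ)) := by
    intro ε hε
    have heq : ∀ n, μ {ω | ε ≤ edist ((a n)⁻¹ * g (T^[n] ω)) 0}
        = μ {ω | ε ≤ edist ((a n)⁻¹ * g ω) 0} := by
      intro n
      have hmp := hT.iterate n
      have hs : MeasurableSet {x : Ω | ε ≤ edist ((a n)⁻¹ * g x) 0} := by
        apply measurableSet_le measurable_const
        exact (measurable_const.mul hg).edist measurable_const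
      have : {ω | ε ≤ edist ((a n)⁻¹ * g (T^[n] ω)) 0}
          = T^[n] ⁻¹' {x | ε ≤ edist ((a n)⁻¹ * g x) 0} := rfl
      rw [this, hmp.measure_preimage hs.nullMeasurableSet]
    simp only [heq]
    exact h1 ε hε
  have h3 := tendstoInMeasure_sub_zero h1 h2
  intro ε hε
  have := h3 ε hε
  simpa only [key, sub_zero] using this
end

section
/- If g ∈ L²(μ) and T is measure preserving, then n^{-1/2} max_{0 ≤ k ≤ n} |S_k(g − g∘T)| → 0 in probability, where S_k(f) = Σ_{j=0}^{k−1} f∘T^j and S_0 = 0. -/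
open MeasureTheory Filter
open scoped ENNReal Topology

/-- If `g ∈ L²(μ)` and `T` is measure preserving, then
`n^{-1/2} max_{0 ≤ k ≤ n} |S_k(g - g∘T)| → 0` in probability. -/
theorem stmt9 {Ω : Type*} [MeasurableSpace Ω] (μ : Measure Ω) [IsProbabilityMeasure μ]
    (T : Ω → Ω) (hT : MeasurePreserving T μ μ) (hTbij : Function.Bijective T)
    (g : Ω → ℝ) (hg : Measurable g) (hg2 : MemLp g 2 μ) :
    TendstoInMeasure μ
      (fun (n : ℕ) ω => (n : ℝ) ^ (-(1/2 : ℝ)) *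
        (Finset.range (n + 1)).sup' Finset.nonempty_range_add_one
          (fun k => |∑ j ∈ Finset.range k, (g (T^[j] ω) - g (T (T^[j] ω)))|))
      atTop (fun _ => (0 : ℝ)) := by
  rw [tendstoInMeasure_iff_dist]
  intro ε hε
  -- threshold
  set b : ℕ → ℝ := fun n => ε * Real.sqrt n / 2 with hb
  have hbnn : ∀ n, 0 ≤ b n := fun n => by
    have := Real.sqrt_nonneg (n : ℝ); positivity
  set A : ℕ → Set Ω := fun n => {ω | b n ≤ |g ω|} with hA
  have hAmeas : ∀ n, MeasurableSet (A n) := fun n =>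
    measurableSet_le measurable_const hg.abs
  -- the truncated second-moment integrals
  set I : ℕ → ℝ≥0∞ := fun n =>
    ∫⁻ ω, (A n).indicator (fun ω => ENNReal.ofReal (g ω ^ 2)) ω ∂μ with hI
  have hInt : Integrable (fun ω => g ω ^ 2) μ := by
    simpa [Pi.pow_apply] using hg2.integrable_sq
  have hbtop : Tendsto b atTop atTop := by
    have h1 : Tendsto (fun n : ℕ => Real.sqrt n) atTop atTop := by
      have h2 := (tendsto_rpow_atTop (by norm_num : (0:ℝ) < 1/2)).comp
        (tendsto_natCast_atTop_atTop : Tendsto (Nat.cast : ℕ → ℝ) atTop atTop)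
      exact h2.congr fun n => by
        simp [Function.comp, Real.sqrt_eq_rpow]
    have h2 := h1.const_mul_atTop hε
    exact h2.atTop_div_const (by norm_num : (0:ℝ) < 2)
  have hIto : Tendsto I atTop (𝓝 0) := by
    have h0 : (0 : ℝ≥0∞) = ∫⁻ _ω, (0 : ℝ≥0∞) ∂μ := by simp
    rw [hI, h0]
    refine tendsto_lintegral_of_dominated_convergence
      (fun ω => ENNReal.ofReal (g ω ^ 2)) (fun n => ?_) (fun n => ?_) ?_ ?_
    · exact ((ENNReal.measurable_ofReal.comp (hg.pow_const 2)).indicator (hAmeas n))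
    · exact Filter.Eventually.of_forall fun ω => Set.indicator_le_self _ _ ω
    · exact hInt.lintegral_lt_top.ne
    · refine Filter.Eventually.of_forall fun ω => ?_
      have : ∀ᶠ n in atTop, (A n).indicator
          (fun ω => ENNReal.ofReal (g ω ^ 2)) ω = 0 := by
        filter_upwards [hbtop.eventually_gt_atTop (|g ω|)] with n hn
        exact Set.indicator_of_notMem (by simp [hA]; exact hn) _
      exact Tendsto.congr' (this.mono fun n h => h.symm) tendsto_const_nhds
  -- Chebyshev-type estimate
  have hkey : ∀ n, ENNReal.ofReal (b n ^ 2) * μ (A n) ≤ I n := by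
    intro n
    simp only [hI]
    rw [lintegral_indicator (hAmeas n)]
    calc ENNReal.ofReal (b n ^ 2) * μ (A n)
        = ∫⁻ _ω in A n, ENNReal.ofReal (b n ^ 2) ∂μ := by
          rw [setLIntegral_const, mul_comm]
      _ ≤ ∫⁻ ω in A n, ENNReal.ofReal (g ω ^ 2) ∂μ := by
          refine setLIntegral_mono (ENNReal.measurable_ofReal.comp (hg.pow_const 2))
            fun ω hω => ?_
          refine ENNReal.ofReal_le_ofReal ?_
          have h1 : b n ≤ |g ω| := hω
          nlinarith [hbnn n, abs_nonneg (g ω), sq_abs (g ω)]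
  -- event containment
  have hE : ∀ n : ℕ, 1 ≤ n →
      {ω | ε ≤ dist ((n : ℝ) ^ (-(1/2 : ℝ)) *
        (Finset.range (n + 1)).sup' Finset.nonempty_range_add_one
          (fun k => |∑ j ∈ Finset.range k, (g (T^[j] ω) - g (T (T^[j] ω)))|)) 0}
      ⊆ ⋃ k ∈ Finset.range (n + 1), (T^[k]) ⁻¹' (A n) := by
    intro n hn ω hω
    have hnpos : (0:ℝ) < n := by exact_mod_cast hn
    have hsq : (0:ℝ) < Real.sqrt n := Real.sqrt_pos.2 hnpos
    -- telescoping
    have htel : ∀ k, ∑ j ∈ Finset.range k, (g (T^[j] ω) - g (T (T^[j] ω)))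
        = g ω - g (T^[k] ω) := by
      intro k
      have : ∀ j, g (T (T^[j] ω)) = g (T^[j+1] ω) := fun j => by
        rw [Function.iterate_succ_apply']
      calc ∑ j ∈ Finset.range k, (g (T^[j] ω) - g (T (T^[j] ω)))
          = ∑ j ∈ Finset.range k, ((fun j => g (T^[j] ω)) j - (fun j => g (T^[j] ω)) (j+1)) := by
            refine Finset.sum_congr rfl fun j _ => by rw [this j]
        _ = g (T^[0] ω) - g (T^[k] ω) := Finset.sum_range_sub' _ _
        _ = g ω - g (T^[k] ω) := by simp
    set s := (Finset.range (n + 1)).sup' Finset.nonempty_range_add_one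
        (fun k => |∑ j ∈ Finset.range k, (g (T^[j] ω) - g (T (T^[j] ω)))|) with hs
    have hsnn : 0 ≤ s :=
      le_trans (abs_nonneg _) (Finset.le_sup' (fun k => |∑ j ∈ Finset.range k,
        (g (T^[j] ω) - g (T (T^[j] ω)))|) (Finset.mem_range.2 n.succ_pos))
    have hc : (n : ℝ) ^ (-(1/2 : ℝ)) = (Real.sqrt n)⁻¹ := by
      rw [Real.rpow_neg (Nat.cast_nonneg n), Real.sqrt_eq_rpow]
    have hω' : ε ≤ (Real.sqrt n)⁻¹ * s := by
      have := hω
      simp only [Set.mem_setOf_eq, Real.dist_eq, sub_zero] at this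
      rw [hc] at this
      rwa [abs_of_nonneg (by positivity)] at this
    have hεs : ε * Real.sqrt n ≤ s := by
      rw [inv_mul_eq_div, le_div_iff₀ hsq] at hω'
      linarith
    obtain ⟨k, hk, hks⟩ := (Finset.le_sup'_iff Finset.nonempty_range_add_one).1
      (le_trans hεs (le_of_eq hs.symm))
    rw [htel k] at hks
    have hcase : b n ≤ |g ω| ∨ b n ≤ |g (T^[k] ω)| := by
      by_contra hcon
      push_neg at hcon
      have habs : |g ω - g (T^[k] ω)| ≤ |g ω| + |g (T^[k] ω)| := abs_sub _ _
      have : ε * Real.sqrt n < 2 * b n := by linarith [hcon.1, hcon.2]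
      rw [hb] at this
      simp only at this
      linarith
    rcases hcase with h | h
    · refine Set.mem_biUnion (Finset.mem_range.2 n.succ_pos) ?_
      simp only [Function.iterate_zero, Set.mem_preimage, id_eq]
      exact h
    · exact Set.mem_biUnion hk h
  -- measure bound
  have hmeas : ∀ n : ℕ, 1 ≤ n →
      μ {ω | ε ≤ dist ((n : ℝ) ^ (-(1/2 : ℝ)) *
        (Finset.range (n + 1)).sup' Finset.nonempty_range_add_one
          (fun k => |∑ j ∈ Finset.range k, (g (T^[j] ω) - g (T (T^[j] ω)))|)) 0}
      ≤ ((n + 1 : ℕ) : ℝ≥0∞) * μ (A n) := by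
    intro n hn
    refine le_trans (measure_mono (hE n hn)) ?_
    refine le_trans (measure_biUnion_finset_le _ _) ?_
    have : ∀ k ∈ Finset.range (n+1), μ ((T^[k]) ⁻¹' (A n)) = μ (A n) := by
      intro k _
      exact (hT.iterate k).measure_preimage (hAmeas n).nullMeasurableSet
    rw [Finset.sum_congr rfl this, Finset.sum_const, Finset.card_range, nsmul_eq_mul]
  -- final squeeze
  have hBound : Tendsto (fun n => ENNReal.ofReal (8 / ε ^ 2) * I n) atTop (𝓝 0) := by
    have := ENNReal.Tendsto.const_mul (a := ENNReal.ofReal (8 / ε ^ 2)) hIto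
      (Or.inr ENNReal.ofReal_ne_top)
    simpa only [mul_zero] using this
  refine tendsto_of_tendsto_of_tendsto_of_le_of_le' tendsto_const_nhds hBound
    (Filter.Eventually.of_forall fun n => zero_le) ?_
  filter_upwards [eventually_ge_atTop 1] with n hn
  have h1 : ((n + 1 : ℕ) : ℝ≥0∞) ≤ ENNReal.ofReal (8 / ε ^ 2) * ENNReal.ofReal (b n ^ 2) := by
    rw [← ENNReal.ofReal_mul (by positivity)]
    rw [← ENNReal.ofReal_natCast]
    refine ENNReal.ofReal_le_ofReal ?_
    have hsqn : Real.sqrt n ^ 2 = (n : ℝ) := Real.sq_sqrt (Nat.cast_nonneg n)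
    have hbn : b n ^ 2 = ε ^ 2 * n / 4 := by
      have hbe : b n = ε * Real.sqrt n / 2 := rfl
      rw [hbe, div_pow, mul_pow, hsqn]; norm_num
    rw [hbn]
    have hεne : (ε:ℝ) ^ 2 ≠ 0 := by positivity
    have hn1 : (1:ℝ) ≤ n := by exact_mod_cast hn
    have h2n : 8 / ε ^ 2 * (ε ^ 2 * (n:ℝ) / 4) = 2 * n := by
      field_simp; ring
    rw [h2n]
    push_cast
    linarith
  calc μ _ ≤ ((n + 1 : ℕ) : ℝ≥0∞) * μ (A n) := hmeas n hn
    _ ≤ (ENNReal.ofReal (8 / ε ^ 2) * ENNReal.ofReal (b n ^ 2)) * μ (A n) :=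
        mul_le_mul_left h1 _
    _ = ENNReal.ofReal (8 / ε ^ 2) * (ENNReal.ofReal (b n ^ 2) * μ (A n)) := by ring
    _ ≤ ENNReal.ofReal (8 / ε ^ 2) * I n := mul_le_mul_right (hkey n) _
end

section
/- Let p be a positive integer and X_1, ..., X_t independent random variables with values in [0,1] almost surely, and X := Σ_{j=1}^t X_j. Then E[X^p] ≤ B_p · max{E[X], (E[X])^p}, where B_p is the p-th Bell number defined by B_0 = B_1 = 1 and B_{p+1} = Σ_{k=0}^p C(p,k) B_k. -/
open MeasureTheory ProbabilityTheory

/-- Berend–Tassa: if `X₁, …, X_t` are independent `[0,1]`-valued random variables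
and `X = ∑ Xⱼ`, then `E[Xᵖ] ≤ B_p · max (E X) ((E X)ᵖ)` where `B_p` is the `p`-th
Bell number. -/
theorem stmt10 {Ω : Type*} [MeasurableSpace Ω] (μ : Measure Ω)
    [IsProbabilityMeasure μ] (t : ℕ) (X : Fin t → Ω → ℝ)
    (hmeas : ∀ j, Measurable (X j))
    (hindep : iIndepFun X μ)
    (hbdd : ∀ j, ∀ᵐ ω ∂μ, X j ω ∈ Set.Icc (0 : ℝ) 1)
    (B : ℕ → ℝ) (hB0 : B 0 = 1) (hB1 : B 1 = 1)
    (hBrec : ∀ p : ℕ, B (p + 1) = ∑ k ∈ Finset.range (p + 1), (p.choose k : ℝ) * B k)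
    (p : ℕ) (hp : 0 < p) :
    ∫ ω, (∑ j, X j ω) ^ p ∂μ ≤
      B p * max (∫ ω, ∑ j, X j ω ∂μ) ((∫ ω, ∑ j, X j ω ∂μ) ^ p) := by
  classical
  -- integrability of bounded measurable functions
  have hbint : ∀ (f : Ω → ℝ) (C : ℝ), Measurable f → (∀ᵐ ω ∂μ, f ω ∈ Set.Icc 0 C) →
      Integrable f μ := by
    intro f C hf hC
    refine (integrable_const C).mono' hf.aestronglyMeasurable ?_
    filter_upwards [hC] with ω hω
    rw [Real.norm_eq_abs, abs_of_nonneg hω.1]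
    exact hω.2
  have hbdd' : ∀ᵐ ω ∂μ, ∀ j, X j ω ∈ Set.Icc (0:ℝ) 1 := ae_all_iff.2 hbdd
  have hTmeas : ∀ s : Finset (Fin t), Measurable (fun ω => ∑ i ∈ s, X i ω) :=
    fun s => Finset.measurable_sum s fun i _ => hmeas i
  have hTmem : ∀ s : Finset (Fin t), ∀ᵐ ω ∂μ, (∑ i ∈ s, X i ω) ∈ Set.Icc (0:ℝ) t := by
    intro s
    filter_upwards [hbdd'] with ω hω
    refine ⟨Finset.sum_nonneg fun i _ => (hω i).1, ?_⟩
    calc ∑ i ∈ s, X i ω ≤ ∑ i ∈ s, 1 := Finset.sum_le_sum fun i _ => (hω i).2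
      _ = (s.card : ℝ) := by simp
      _ ≤ t := by
        have h : s.card ≤ t := by simpa using Finset.card_le_univ s
        exact_mod_cast h
  have hmul_int : ∀ (j : Fin t) (a b : ℕ) (s : Finset (Fin t)),
      Integrable (fun ω => X j ω ^ a * (∑ i ∈ s, X i ω) ^ b) μ := by
    intro j a b s
    refine hbint _ ((t:ℝ)^b) (((hmeas j).pow_const a).mul ((hTmeas s).pow_const b)) ?_
    filter_upwards [hTmem s, hbdd j] with ω h1 h2
    have h0X : 0 ≤ X j ω ^ a := pow_nonneg h2.1 a
    have h0T : 0 ≤ (∑ i ∈ s, X i ω) ^ b := pow_nonneg h1.1 b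
    refine ⟨mul_nonneg h0X h0T, ?_⟩
    calc X j ω ^ a * (∑ i ∈ s, X i ω) ^ b ≤ 1 * (t:ℝ)^b :=
        mul_le_mul (pow_le_one₀ h2.1 h2.2) (pow_le_pow_left₀ h1.1 h1.2 b) h0T zero_le_one
      _ = (t:ℝ)^b := one_mul _
  have hTpow_int : ∀ (s : Finset (Fin t)) (k : ℕ),
      Integrable (fun ω => (∑ i ∈ s, X i ω) ^ k) μ := by
    intro s k
    refine hbint _ ((t:ℝ)^k) ((hTmeas s).pow_const k) ?_
    filter_upwards [hTmem s] with ω hω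
    exact ⟨pow_nonneg hω.1 k, pow_le_pow_left₀ hω.1 hω.2 k⟩
  have hX_int : ∀ (j : Fin t) (a : ℕ), Integrable (fun ω => X j ω ^ a) μ := by
    intro j a
    refine hbint _ 1 ((hmeas j).pow_const a) ?_
    filter_upwards [hbdd j] with ω hω
    exact ⟨pow_nonneg hω.1 a, pow_le_one₀ hω.1 hω.2⟩
  have hBnn : ∀ k, 0 ≤ B k := by
    intro k
    induction k using Nat.strong_induction_on with
    | _ k ih =>
      match k, ih with
      | 0, _ => rw [hB0]; exact zero_le_one
      | (n+1), ih =>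
        rw [hBrec n]
        exact Finset.sum_nonneg fun i hi => mul_nonneg (Nat.cast_nonneg _)
          (ih i (Finset.mem_range.1 hi))
  set m := ∫ ω, ∑ j, X j ω ∂μ with hm_def
  have hm0 : 0 ≤ m := integral_nonneg_of_ae (by
    filter_upwards [hbdd'] with ω hω
    exact Finset.sum_nonneg fun i _ => (hω i).1)
  have hm_sum : m = ∑ j, ∫ ω, X j ω ∂μ := by
    rw [hm_def]
    exact integral_finset_sum _ fun j _ => by simpa using hX_int j 1
  have key : ∀ n, ∫ ω, (∑ j, X j ω) ^ n ∂μ ≤ B n * max m (m ^ n) := by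
    intro n
    induction n using Nat.strong_induction_on with
    | _ n ih =>
      match n, ih with
      | 0, _ =>
        simp only [pow_zero, hB0, one_mul, integral_const, measure_univ, ENNReal.toReal_one,
          probReal_univ, smul_eq_mul, mul_one]
        exact le_max_right _ _
      | 1, _ =>
        simp only [pow_one, hB1, one_mul, max_self]
        rw [← hm_def]
      | (q+2), ih =>
        set r := q + 1 with hr
        have hq1 : 1 ≤ r := by omega
        show ∫ ω, (∑ j, X j ω) ^ (r+1) ∂μ ≤ B (r+1) * max m (m ^ (r+1))
        have hstepA : ∫ ω, (∑ j, X j ω) ^ (r+1) ∂μ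
            = ∑ j, ∫ ω, X j ω * (∑ i, X i ω) ^ r ∂μ := by
          have e : ∀ ω, (∑ j, X j ω) ^ (r+1) = ∑ j, X j ω * (∑ i, X i ω) ^ r := by
            intro ω
            rw [pow_succ', Finset.sum_mul]
          simp only [e]
          exact integral_finset_sum _ fun j _ => by
            simpa using hmul_int j 1 r Finset.univ
        have hstepB : ∀ j : Fin t, ∫ ω, X j ω * (∑ i, X i ω) ^ r ∂μ
            ≤ (∫ ω, X j ω ∂μ) * ∑ k ∈ Finset.range (r+1),
                (r.choose k : ℝ) * ∫ ω, (∑ i, X i ω) ^ (r - k) ∂μ := by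
          intro j
          set s : Finset (Fin t) := Finset.univ.erase j with hs
          have hsplit : ∀ ω, (∑ i, X i ω) = X j ω + ∑ i ∈ s, X i ω := by
            intro ω
            rw [hs]
            exact (Finset.add_sum_erase Finset.univ (fun i => X i ω) (Finset.mem_univ j)).symm
          have e : ∀ ω, X j ω * (∑ i, X i ω) ^ r
              = ∑ k ∈ Finset.range (r+1),
                  (r.choose k : ℝ) * (X j ω ^ (k+1) * (∑ i ∈ s, X i ω) ^ (r-k)) := by
            intro ω
            rw [hsplit ω, add_pow, Finset.mul_sum]
            refine Finset.sum_congr rfl fun k hk => ?_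
            ring
          have hindep' : ∀ k : ℕ, IndepFun (fun ω => X j ω ^ (k+1))
              (fun ω => (∑ i ∈ s, X i ω) ^ (r-k)) μ := by
            intro k
            have h1 : IndepFun (∑ i ∈ s, X i) (X j) μ :=
              hindep.indepFun_finsetSum_of_notMem hmeas (Finset.notMem_erase j Finset.univ)
            have h2 := h1.symm.comp (measurable_id.pow_const (k+1)) (measurable_id.pow_const (r-k))
            have hfun : ((fun x : ℝ => x ^ (r-k)) ∘ (∑ i ∈ s, X i))
                = fun ω => (∑ i ∈ s, X i ω) ^ (r-k) := by
              ext ω; simp [Finset.sum_apply]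
            exact hfun ▸ h2
          calc ∫ ω, X j ω * (∑ i, X i ω) ^ r ∂μ
              = ∑ k ∈ Finset.range (r+1), (r.choose k : ℝ) *
                  ((∫ ω, X j ω ^ (k+1) ∂μ) * (∫ ω, (∑ i ∈ s, X i ω) ^ (r-k) ∂μ)) := by
                simp only [e]
                rw [integral_finset_sum _ fun k _ => ((hmul_int j (k+1) (r-k) s).const_mul _)]
                refine Finset.sum_congr rfl fun k hk => ?_
                rw [integral_const_mul]
                congr 1
                exact (hindep' k).integral_fun_mul_eq_mul_integral ((hmeas j).pow_const _).aestronglyMeasurable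
                  ((hTmeas s).pow_const _).aestronglyMeasurable
            _ ≤ ∑ k ∈ Finset.range (r+1), (r.choose k : ℝ) *
                  ((∫ ω, X j ω ∂μ) * (∫ ω, (∑ i, X i ω) ^ (r-k) ∂μ)) := by
                refine Finset.sum_le_sum fun k hk => ?_
                refine mul_le_mul_of_nonneg_left ?_ (Nat.cast_nonneg _)
                refine mul_le_mul ?_ ?_ ?_ ?_
                · refine integral_mono_ae (hX_int j (k+1)) (by simpa using hX_int j 1) ?_
                  filter_upwards [hbdd j] with ω hω
                  calc X j ω ^ (k+1) ≤ X j ω ^ 1 :=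
                      pow_le_pow_of_le_one hω.1 hω.2 (by omega)
                    _ = X j ω := pow_one _
                · refine integral_mono_ae (hTpow_int s (r-k)) (hTpow_int Finset.univ (r-k)) ?_
                  filter_upwards [hbdd'] with ω hω
                  refine pow_le_pow_left₀ (Finset.sum_nonneg fun i _ => (hω i).1) ?_ _
                  exact Finset.sum_le_sum_of_subset_of_nonneg (Finset.subset_univ s)
                    fun i _ _ => (hω i).1
                · exact integral_nonneg_of_ae (by
                    filter_upwards [hTmem s] with ω hω
                    exact pow_nonneg hω.1 _)
                · exact integral_nonneg_of_ae (by
                    filter_upwards [hbdd j] with ω hω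
                    exact hω.1)
            _ = (∫ ω, X j ω ∂μ) * ∑ k ∈ Finset.range (r+1),
                  (r.choose k : ℝ) * ∫ ω, (∑ i, X i ω) ^ (r-k) ∂μ := by
                rw [Finset.mul_sum]
                exact Finset.sum_congr rfl fun k _ => by ring
        have hA2 : ∫ ω, (∑ j, X j ω) ^ (r+1) ∂μ
            ≤ m * ∑ k ∈ Finset.range (r+1), (r.choose k : ℝ) *
                ∫ ω, (∑ i, X i ω) ^ (r-k) ∂μ := by
          rw [hstepA, hm_sum, Finset.sum_mul]
          exact Finset.sum_le_sum fun j _ => hstepB j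
        have hkmax : ∀ i : ℕ, i ≤ r → m * max m (m ^ i) ≤ max m (m ^ (r+1)) := by
          intro i hi
          rcases le_total m 1 with hm1 | hm1
          · have h1 : max m (m ^ i) ≤ 1 := max_le hm1 (pow_le_one₀ hm0 hm1)
            calc m * max m (m ^ i) ≤ m * 1 := mul_le_mul_of_nonneg_left h1 hm0
              _ = m := mul_one m
              _ ≤ max m (m ^ (r+1)) := le_max_left _ _
          · have h1 : max m (m ^ i) ≤ m ^ r :=
              max_le (le_self_pow₀ hm1 (by omega)) (pow_le_pow_right₀ hm1 hi)
            calc m * max m (m ^ i) ≤ m * m ^ r := mul_le_mul_of_nonneg_left h1 hm0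
              _ = m ^ (r+1) := (pow_succ' m r).symm
              _ ≤ max m (m ^ (r+1)) := le_max_right _ _
        have hsumB : ∑ k ∈ Finset.range (r+1), (r.choose k : ℝ) * B (r-k) = B (r+1) := by
          rw [hBrec r, ← Finset.sum_range_reflect (fun k => (r.choose k : ℝ) * B k) (r+1)]
          refine Finset.sum_congr rfl fun k hk => ?_
          have hk' : k ≤ r := by
            have := Finset.mem_range.1 hk; omega
          have h1 : r + 1 - 1 - k = r - k := by omega
          rw [h1, Nat.choose_symm hk']
        calc ∫ ω, (∑ j, X j ω) ^ (r+1) ∂μ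
            ≤ m * ∑ k ∈ Finset.range (r+1), (r.choose k : ℝ) *
                ∫ ω, (∑ i, X i ω) ^ (r-k) ∂μ := hA2
          _ ≤ m * ∑ k ∈ Finset.range (r+1), (r.choose k : ℝ) *
                (B (r-k) * max m (m ^ (r-k))) := by
              refine mul_le_mul_of_nonneg_left (Finset.sum_le_sum fun k hk => ?_) hm0
              exact mul_le_mul_of_nonneg_left (ih (r-k) (by omega)) (Nat.cast_nonneg _)
          _ = ∑ k ∈ Finset.range (r+1), (r.choose k : ℝ) * B (r-k) *
                (m * max m (m ^ (r-k))) := by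
              rw [Finset.mul_sum]
              exact Finset.sum_congr rfl fun k _ => by ring
          _ ≤ ∑ k ∈ Finset.range (r+1), (r.choose k : ℝ) * B (r-k) *
                max m (m ^ (r+1)) := by
              refine Finset.sum_le_sum fun k hk => ?_
              exact mul_le_mul_of_nonneg_left (hkmax (r-k) (by omega))
                (mul_nonneg (Nat.cast_nonneg _) (hBnn _))
          _ = B (r+1) * max m (m ^ (r+1)) := by
              rw [← Finset.sum_mul, hsumB]
  exact key p
end

section
/- Let e be a random variable with μ{e = 1} = μ{e = −1} = 1/(2n²) and μ{e = 0} = 1 − 1/n², let T be measure preserving with (e∘T^i)_{i∈ℤ} i.i.d., and set h := Σ_{i=0}^{n−1} e∘T^{−i} − Σ_{i=0}^{n−1} e∘T^{−(n+i)}. Then for every positive integer p, E[|h|^p] ≤ 2·B_p / n, where B_p is the p-th Bell number. -/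
open MeasureTheory ProbabilityTheory
open scoped ENNReal

private lemma bell_one_le (B : ℕ → ℝ) (hB0 : B 0 = 1)
    (hBrec : ∀ p : ℕ, B (p + 1) = ∑ k ∈ Finset.range (p + 1), (p.choose k : ℝ) * B k) :
    ∀ k, 1 ≤ B k := by
  intro k
  induction k using Nat.strong_induction_on with
  | _ k ih =>
    match k, ih with
    | 0, _ => simp [hB0]
    | q + 1, ih =>
      rw [hBrec]
      have h0mem : 0 ∈ Finset.range (q + 1) := Finset.mem_range.2 (Nat.succ_pos q)
      calc (1 : ℝ) = (q.choose 0 : ℝ) * B 0 := by simp [hB0]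
        _ ≤ ∑ k ∈ Finset.range (q + 1), (q.choose k : ℝ) * B k := by
          refine Finset.single_le_sum (f := fun k => (q.choose k : ℝ) * B k) ?_ h0mem
          intro i hi
          have h1 : 1 ≤ B i := ih i (Finset.mem_range.1 hi)
          exact mul_nonneg (Nat.cast_nonneg _) (zero_le_one.trans h1)

private lemma moment_rec_le (B M : ℕ → ℝ) (c : ℝ) (hc0 : 0 ≤ c) (hc1 : c ≤ 1)
    (hB0 : B 0 = 1)
    (hBrec : ∀ p : ℕ, B (p + 1) = ∑ k ∈ Finset.range (p + 1), (p.choose k : ℝ) * B k)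
    (hM0 : M 0 = 1)
    (hstep : ∀ p : ℕ, M (p + 1) ≤ c * ∑ k ∈ Finset.range (p + 1), (p.choose k : ℝ) * M k) :
    ∀ p, 1 ≤ p → M p ≤ c * B p := by
  have hB1 := bell_one_le B hB0 hBrec
  intro p
  induction p using Nat.strong_induction_on with
  | _ p ih =>
    intro hp
    obtain ⟨q, rfl⟩ : ∃ q, p = q + 1 := ⟨p - 1, by omega⟩
    have hMB : ∀ k, k < q + 1 → M k ≤ B k := by
      intro k hk
      rcases Nat.eq_zero_or_pos k with rfl | hk1
      · rw [hM0]; exact hB1 0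
      · calc M k ≤ c * B k := ih k hk hk1
          _ ≤ 1 * B k := mul_le_mul_of_nonneg_right hc1 (zero_le_one.trans (hB1 k))
          _ = B k := one_mul _
    calc M (q + 1) ≤ c * ∑ k ∈ Finset.range (q + 1), (q.choose k : ℝ) * M k := hstep q
      _ ≤ c * ∑ k ∈ Finset.range (q + 1), (q.choose k : ℝ) * B k := by
          refine mul_le_mul_of_nonneg_left ?_ hc0
          refine Finset.sum_le_sum fun k hk => ?_
          exact mul_le_mul_of_nonneg_left (hMB k (Finset.mem_range.1 hk)) (Nat.cast_nonneg _)
      _ = c * B (q + 1) := by rw [hBrec]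

/-- If `e` has the symmetric three-point distribution `μ{e = ±1} = 1/(2n²)`,
`μ{e = 0} = 1 - 1/n²`, the family `(e ∘ T^i)_{i ∈ ℤ}` is i.i.d. for an invertible
measure-preserving `T`, and `h = ∑_{i<n} e∘T⁻ⁱ - ∑_{i<n} e∘T^{-(n+i)}`, then
`E[|h|ᵖ] ≤ 2 B_p / n` for every positive integer `p`, where `B_p` is the `p`-th
Bell number. -/
theorem stmt11 {Ω : Type*} [MeasurableSpace Ω] (μ : Measure Ω)
    [IsProbabilityMeasure μ] (T : Equiv.Perm Ω)
    (hT : MeasurePreserving T μ μ) (hT' : MeasurePreserving T.symm μ μ)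
    (n : ℕ) (hn : 2 ≤ n) (e : Ω → ℝ) (he : Measurable e)
    (h1 : μ {ω | e ω = 1} = 1 / (2 * (n : ℝ≥0∞) ^ 2))
    (hm1 : μ {ω | e ω = -1} = 1 / (2 * (n : ℝ≥0∞) ^ 2))
    (h0 : μ {ω | e ω = 0} = 1 - 1 / (n : ℝ≥0∞) ^ 2)
    (hindep : iIndepFun
      (fun (i : ℤ) ω => e ((T ^ i) ω)) μ)
    (hident : ∀ i : ℤ, IdentDistrib (fun ω => e ((T ^ i) ω)) e μ μ)
    (h : Ω → ℝ)
    (hdef : h = fun ω => (∑ i ∈ Finset.range n, e ((T ^ (-(i : ℤ))) ω))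
      - ∑ i ∈ Finset.range n, e ((T ^ (-((n : ℤ) + i))) ω))
    (B : ℕ → ℝ) (hB0 : B 0 = 1) (hB1 : B 1 = 1)
    (hBrec : ∀ p : ℕ, B (p + 1) = ∑ k ∈ Finset.range (p + 1), (p.choose k : ℝ) * B k)
    (p : ℕ) (hp : 0 < p) :
    ∫ ω, |h ω| ^ p ∂μ ≤ 2 * B p / n := by
  classical
  have hnR : (0:ℝ) < n := by
    have : (0:ℕ) < n := by omega
    exact_mod_cast this
  have hnR' : (n:ℝ) ≠ 0 := ne_of_gt hnR
  -- measure preserving powers of T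
  have hTpow : ∀ k : ℕ, MeasurePreserving (⇑(T ^ k)) μ μ := by
    intro k
    induction k with
    | zero => simpa using MeasurePreserving.id μ
    | succ k ihk =>
        have hco : (⇑(T ^ (k+1)) : Ω → Ω) = ⇑(T ^ k) ∘ ⇑T := by
          rw [pow_succ]; rfl
        rw [hco]; exact ihk.comp hT
  have hTinv : MeasurePreserving (⇑(T⁻¹ : Equiv.Perm Ω)) μ μ := hT'
  have hTinvpow : ∀ k : ℕ, MeasurePreserving (⇑((T⁻¹ : Equiv.Perm Ω) ^ k)) μ μ := by
    intro k
    induction k with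
    | zero => simpa using MeasurePreserving.id μ
    | succ k ihk =>
        have hco : (⇑((T⁻¹ : Equiv.Perm Ω) ^ (k+1)) : Ω → Ω) = ⇑(T⁻¹ ^ k) ∘ ⇑(T⁻¹ : Equiv.Perm Ω) := by
          rw [pow_succ]; rfl
        rw [hco]; exact ihk.comp hTinv
  have hTz : ∀ i : ℤ, MeasurePreserving (⇑(T ^ i)) μ μ := by
    intro i
    cases i with
    | ofNat k => simpa [zpow_natCast] using hTpow k
    | negSucc k =>
        have : (T ^ (Int.negSucc k) : Equiv.Perm Ω) = (T⁻¹) ^ (k+1) := by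
          rw [zpow_negSucc, inv_pow]
        rw [this]; exact hTinvpow (k+1)
  -- the absolute-value variables
  set X : ℤ → Ω → ℝ := fun i ω => |e ((T ^ i) ω)| with hXdef
  have hXmeas : ∀ i, Measurable (X i) := fun i => (he.comp (hTz i).measurable).abs
  have hX0 : ∀ i ω, 0 ≤ X i ω := fun i ω => abs_nonneg _
  have hXindep : iIndepFun X μ :=
    hindep.comp (fun _ => fun x : ℝ => |x|) (fun _ => measurable_abs)
  -- the law of e
  have hdisj1 : Disjoint {ω | e ω = 1} {ω | e ω = -1} := by
    rw [Set.disjoint_left]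
    intro ω hω1 hω2
    simp only [Set.mem_setOf_eq] at hω1 hω2
    rw [hω1] at hω2; norm_num at hω2
  have hm1' : MeasurableSet {ω | e ω = -1} := he (measurableSet_singleton (-1))
  have h1' : MeasurableSet {ω | e ω = 1} := he (measurableSet_singleton 1)
  have h0' : MeasurableSet {ω | e ω = 0} := he (measurableSet_singleton 0)
  have hA : μ ({ω | e ω = 1} ∪ {ω | e ω = -1}) = 1 / (n : ℝ≥0∞) ^ 2 := by
    rw [measure_union hdisj1 hm1', h1, hm1, ENNReal.div_add_div_same, one_add_one_eq_two]
    calc (2:ℝ≥0∞) / (2 * (n : ℝ≥0∞) ^ 2) = 2 * 1 / (2 * (n : ℝ≥0∞) ^ 2) := by rw [mul_one]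
      _ = 1 / (n : ℝ≥0∞) ^ 2 := ENNReal.mul_div_mul_left 1 _ two_ne_zero (by norm_num)
  have hone_le : (1:ℝ≥0∞) ≤ (n : ℝ≥0∞) ^ 2 := by
    have h1n : (1:ℝ≥0∞) ≤ (n : ℝ≥0∞) := by
      exact_mod_cast Nat.one_le_cast.mpr (by omega)
    calc (1:ℝ≥0∞) = 1 ^ 2 := by norm_num
      _ ≤ (n : ℝ≥0∞) ^ 2 := by gcongr
  have hq_le_one : 1 / (n : ℝ≥0∞) ^ 2 ≤ 1 := by
    rw [one_div, ENNReal.inv_le_one]; exact hone_le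
  have hdisj2 : Disjoint ({ω | e ω = 1} ∪ {ω | e ω = -1}) {ω | e ω = 0} := by
    rw [Set.disjoint_left]
    rintro ω (hω1 | hω1) hω2 <;>
      simp only [Set.mem_setOf_eq] at hω1 hω2 <;> rw [hω1] at hω2 <;> norm_num at hω2
  have hU : μ (({ω | e ω = 1} ∪ {ω | e ω = -1}) ∪ {ω | e ω = 0}) = 1 := by
    rw [measure_union hdisj2 h0', hA, h0, add_tsub_cancel_of_le hq_le_one]
  have he3 : ∀ᵐ ω ∂μ, e ω = 1 ∨ e ω = -1 ∨ e ω = 0 := by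
    have hc : μ ((({ω | e ω = 1} ∪ {ω | e ω = -1}) ∪ {ω | e ω = 0})ᶜ) = 0 :=
      (prob_compl_eq_zero_iff ((h1'.union hm1').union h0')).2 hU
    rw [ae_iff]
    convert hc using 2
    ext ω
    simp [Set.mem_union, Set.mem_setOf_eq]
    tauto
  have haeT : ∀ i : ℤ, ∀ᵐ ω ∂μ,
      e ((T ^ i) ω) = 1 ∨ e ((T ^ i) ω) = -1 ∨ e ((T ^ i) ω) = 0 := by
    intro i
    rw [ae_iff] at he3 ⊢
    have hpre : {ω | ¬(e ((T ^ i) ω) = 1 ∨ e ((T ^ i) ω) = -1 ∨ e ((T ^ i) ω) = 0)}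
        = (⇑(T ^ i)) ⁻¹' {ω | ¬(e ω = 1 ∨ e ω = -1 ∨ e ω = 0)} := rfl
    rw [hpre, (hTz i).measure_preimage ?_]
    · exact he3
    · refine MeasurableSet.nullMeasurableSet ?_
      have : MeasurableSet {ω | e ω = 1 ∨ e ω = -1 ∨ e ω = 0} := by
        have : {ω | e ω = 1 ∨ e ω = -1 ∨ e ω = 0}
            = {ω | e ω = 1} ∪ ({ω | e ω = -1} ∪ {ω | e ω = 0}) := by
          ext ω; simp [Set.mem_union, Set.mem_setOf_eq]
        rw [this]
        exact h1'.union (hm1'.union h0')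
      exact this.compl
  have haeX : ∀ i : ℤ, ∀ᵐ ω ∂μ, X i ω = 0 ∨ X i ω = 1 := by
    intro i
    filter_upwards [haeT i] with ω hω
    rcases hω with hv | hv | hv <;> simp [hXdef, hv]
  have hXle1 : ∀ i : ℤ, ∀ᵐ ω ∂μ, X i ω ≤ 1 := by
    intro i
    filter_upwards [haeX i] with ω hω
    rcases hω with hv | hv <;> rw [hv] <;> norm_num
  -- expectation of |e|
  have htoReal : (1 / (n : ℝ≥0∞) ^ 2).toReal = 1 / (n:ℝ)^2 := by
    rw [ENNReal.toReal_div]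
    simp
  have hEe : ∫ ω, |e ω| ∂μ = 1 / (n:ℝ)^2 := by
    have hind : (fun ω => |e ω|)
        =ᵐ[μ] (({ω | e ω = 1} ∪ {ω | e ω = -1}).indicator fun _ => (1:ℝ)) := by
      filter_upwards [he3] with ω hω
      rcases hω with hv | hv | hv
      · have hmem : ω ∈ {ω | e ω = 1} ∪ {ω | e ω = -1} := Or.inl hv
        rw [Set.indicator_of_mem hmem, hv]; norm_num
      · have hmem : ω ∈ {ω | e ω = 1} ∪ {ω | e ω = -1} := Or.inr hv
        rw [Set.indicator_of_mem hmem, hv]; norm_num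
      · have hmem : ω ∉ {ω | e ω = 1} ∪ {ω | e ω = -1} := by
          rintro (hc | hc) <;> simp only [Set.mem_setOf_eq] at hc <;>
            rw [hv] at hc <;> norm_num at hc
        rw [Set.indicator_of_notMem hmem, hv]; norm_num
    rw [integral_congr_ae hind, integral_indicator_const _ (h1'.union hm1'), measureReal_def, hA,
      smul_eq_mul, mul_one, htoReal]
  have hEX : ∀ i : ℤ, ∫ ω, X i ω ∂μ = 1 / (n:ℝ)^2 := by
    intro i
    have hid := ((hident i).comp measurable_abs).integral_eq
    calc ∫ ω, X i ω ∂μ = ∫ ω, |e ω| ∂μ := hid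
      _ = 1 / (n:ℝ)^2 := hEe
  -- integrability helper
  have hIntB : ∀ (f : Ω → ℝ) (C : ℝ), Measurable f → (∀ᵐ ω ∂μ, ‖f ω‖ ≤ C) →
      Integrable f μ := fun f C hf hb =>
    Integrable.mono' (integrable_const C) hf.aestronglyMeasurable hb
  have hIntX : ∀ i : ℤ, Integrable (X i) μ := by
    intro i
    refine hIntB _ 1 (hXmeas i) ?_
    filter_upwards [hXle1 i] with ω hω
    rw [Real.norm_eq_abs, abs_of_nonneg (hX0 i ω)]; exact hω
  -- the index set
  set t : Finset ℤ := (Finset.range (2*n)).image (fun i : ℕ => -(i:ℤ)) with htdef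
  have hinj : Function.Injective (fun i : ℕ => -(i:ℤ)) := by
    intro a b hab
    simpa using hab
  have htcard : t.card = 2*n := by
    rw [htdef, Finset.card_image_of_injective _ hinj, Finset.card_range]
  have hSb : ∀ᵐ ω ∂μ, ∀ i ∈ t, X i ω ≤ 1 := by
    have := (ae_ball_iff (t : Set ℤ).to_countable).2
      (fun i (_ : i ∈ (t : Set ℤ)) => hXle1 i)
    filter_upwards [this] with ω hω i hi
    exact hω i hi
  have hSle : ∀ᵐ ω ∂μ, ∀ s : Finset ℤ, s ⊆ t → (∑ i ∈ s, X i ω) ≤ (2*n : ℝ) := by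
    filter_upwards [hSb] with ω hω s hs
    calc ∑ i ∈ s, X i ω ≤ ∑ _i ∈ s, (1:ℝ) :=
          Finset.sum_le_sum (fun i hi => hω i (hs hi))
      _ = s.card := by simp
      _ ≤ (t.card : ℝ) := by exact_mod_cast Finset.card_le_card hs
      _ = 2*n := by rw [htcard]; push_cast; ring
  have hSnonneg : ∀ (s : Finset ℤ) ω, 0 ≤ ∑ i ∈ s, X i ω :=
    fun s ω => Finset.sum_nonneg fun i _ => hX0 i ω
  have hSmeas : ∀ s : Finset ℤ, Measurable (fun ω => ∑ i ∈ s, X i ω) :=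
    fun s => Finset.measurable_sum s fun i _ => hXmeas i
  have hIntS : ∀ (s : Finset ℤ), s ⊆ t → ∀ k : ℕ,
      Integrable (fun ω => (∑ i ∈ s, X i ω)^k) μ := by
    intro s hs k
    refine hIntB _ ((2*n:ℝ)^k) ((hSmeas s).pow_const k) ?_
    filter_upwards [hSle] with ω hω
    rw [Real.norm_eq_abs, abs_of_nonneg (pow_nonneg (hSnonneg s ω) k)]
    exact pow_le_pow_left₀ (hSnonneg s ω) (hω s hs) k
  have hIntXS : ∀ (i : ℤ) (s : Finset ℤ), s ⊆ t → ∀ k : ℕ,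
      Integrable (fun ω => X i ω * (∑ j ∈ s, X j ω)^k) μ := by
    intro i s hs k
    refine hIntB _ ((2*n:ℝ)^k) ((hXmeas i).mul ((hSmeas s).pow_const k)) ?_
    filter_upwards [hSle, hXle1 i] with ω hω hωX
    rw [Real.norm_eq_abs, abs_of_nonneg (mul_nonneg (hX0 i ω) (pow_nonneg (hSnonneg s ω) k))]
    calc X i ω * (∑ j ∈ s, X j ω)^k ≤ 1 * (∑ j ∈ s, X j ω)^k :=
          mul_le_mul_of_nonneg_right hωX (pow_nonneg (hSnonneg s ω) k)
      _ = (∑ j ∈ s, X j ω)^k := one_mul _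
      _ ≤ (2*n:ℝ)^k := pow_le_pow_left₀ (hSnonneg s ω) (hω s hs) k
  -- independence of X i and powers of sums avoiding i
  have hIndep2 : ∀ (i : ℤ) (s : Finset ℤ), i ∉ s → ∀ k : ℕ,
      IndepFun (fun ω => (∑ j ∈ s, X j ω)^k) (X i) μ := by
    intro i s his k
    have h0' : IndepFun (∑ j ∈ s, X j) (X i) μ :=
      hXindep.indepFun_finset_sum_of_notMem hXmeas his
    have hC := h0'.comp (measurable_id.pow_const k) measurable_id
    have hfe : (fun ω => (∑ j ∈ s, X j ω)^k) = (fun x : ℝ => x ^ k) ∘ (∑ j ∈ s, X j) := by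
      funext ω; simp [Function.comp, Finset.sum_apply]
    rw [hfe]
    exact hC
  -- the moments
  set M : ℕ → ℝ := fun k => ∫ ω, (∑ i ∈ t, X i ω)^k ∂μ with hMdef
  have hM0 : M 0 = 1 := by
    simp [hMdef]
  have hMof : ∀ (s : Finset ℤ), s ⊆ t → ∀ k : ℕ,
      ∫ ω, (∑ j ∈ s, X j ω)^k ∂μ ≤ M k := by
    intro s hs k
    refine integral_mono (hIntS s hs k) (hIntS t subset_rfl k) ?_
    intro ω
    refine pow_le_pow_left₀ (hSnonneg s ω) ?_ k
    exact Finset.sum_le_sum_of_subset_of_nonneg hs fun i _ _ => hX0 i ω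
  have hstep : ∀ p : ℕ,
      M (p+1) ≤ (2/(n:ℝ)) * ∑ k ∈ Finset.range (p+1), (p.choose k : ℝ) * M k := by
    intro p
    have hexp : M (p+1) = ∑ i ∈ t, ∫ ω, X i ω * (∑ j ∈ t, X j ω)^p ∂μ := by
      have hpt : ∀ ω, (∑ i ∈ t, X i ω)^(p+1)
          = ∑ i ∈ t, X i ω * (∑ j ∈ t, X j ω)^p := by
        intro ω
        rw [pow_succ', Finset.sum_mul]
      calc M (p+1) = ∫ ω, ∑ i ∈ t, X i ω * (∑ j ∈ t, X j ω)^p ∂μ := by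
            rw [hMdef]; exact integral_congr_ae (Filter.Eventually.of_forall hpt)
        _ = ∑ i ∈ t, ∫ ω, X i ω * (∑ j ∈ t, X j ω)^p ∂μ :=
            integral_finset_sum t fun i _ => hIntXS i t subset_rfl p
    rw [hexp]
    have hq0 : (0:ℝ) ≤ 1/(n:ℝ)^2 := by positivity
    have hkey : ∀ i ∈ t, ∫ ω, X i ω * (∑ j ∈ t, X j ω)^p ∂μ
        ≤ (1/(n:ℝ)^2) * ∑ k ∈ Finset.range (p+1), (p.choose k : ℝ) * M k := by
      intro i hit
      have hsub : t.erase i ⊆ t := Finset.erase_subset _ _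
      have hnm : i ∉ t.erase i := Finset.notMem_erase _ _
      have hae : (fun ω => X i ω * (∑ j ∈ t, X j ω)^p)
          =ᵐ[μ] (fun ω => ∑ k ∈ Finset.range (p+1),
            (p.choose k : ℝ) * (X i ω * (∑ j ∈ t.erase i, X j ω)^k)) := by
        filter_upwards [haeX i] with ω hω
        have hsplit : ∑ j ∈ t, X j ω = ∑ j ∈ t.erase i, X j ω + X i ω :=
          (Finset.sum_erase_add t _ hit).symm
        rcases hω with hv | hv
        · simp [hv]
        · rw [hsplit, hv, add_pow, one_mul]
          exact Finset.sum_congr rfl fun k _ => by ring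
      rw [integral_congr_ae hae,
        integral_finset_sum _ (fun k _ => (hIntXS i (t.erase i) hsub k).const_mul _)]
      have hterm : ∀ k ∈ Finset.range (p+1),
          ∫ ω, (p.choose k : ℝ) * (X i ω * (∑ j ∈ t.erase i, X j ω)^k) ∂μ
          ≤ (p.choose k : ℝ) * ((1/(n:ℝ)^2) * M k) := by
        intro k _
        rw [integral_const_mul]
        refine mul_le_mul_of_nonneg_left ?_ (Nat.cast_nonneg _)
        have hmul : ∫ ω, X i ω * (∑ j ∈ t.erase i, X j ω)^k ∂μ
            = (1/(n:ℝ)^2) * ∫ ω, (∑ j ∈ t.erase i, X j ω)^k ∂μ := by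
          have hI := ProbabilityTheory.IndepFun.integral_mul_eq_mul_integral
            (hIndep2 i (t.erase i) hnm k).symm (hIntX i).1 (hIntS (t.erase i) hsub k).1
          calc ∫ ω, X i ω * (∑ j ∈ t.erase i, X j ω)^k ∂μ
              = ∫ ω, (X i * fun ω => (∑ j ∈ t.erase i, X j ω)^k) ω ∂μ := rfl
            _ = (∫ ω, X i ω ∂μ) * ∫ ω, (∑ j ∈ t.erase i, X j ω)^k ∂μ := hI
            _ = (1/(n:ℝ)^2) * ∫ ω, (∑ j ∈ t.erase i, X j ω)^k ∂μ := by rw [hEX i]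
        rw [hmul]
        exact mul_le_mul_of_nonneg_left (hMof (t.erase i) hsub k) hq0
      calc ∑ k ∈ Finset.range (p+1),
            ∫ ω, (p.choose k : ℝ) * (X i ω * (∑ j ∈ t.erase i, X j ω)^k) ∂μ
          ≤ ∑ k ∈ Finset.range (p+1), (p.choose k : ℝ) * ((1/(n:ℝ)^2) * M k) :=
            Finset.sum_le_sum hterm
        _ = (1/(n:ℝ)^2) * ∑ k ∈ Finset.range (p+1), (p.choose k : ℝ) * M k := by
            rw [Finset.mul_sum]
            exact Finset.sum_congr rfl fun k _ => by ring
    calc ∑ i ∈ t, ∫ ω, X i ω * (∑ j ∈ t, X j ω)^p ∂μ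
        ≤ ∑ _i ∈ t, (1/(n:ℝ)^2) * ∑ k ∈ Finset.range (p+1), (p.choose k : ℝ) * M k :=
          Finset.sum_le_sum hkey
      _ = (t.card : ℝ) * ((1/(n:ℝ)^2) * ∑ k ∈ Finset.range (p+1), (p.choose k : ℝ) * M k) := by
          rw [Finset.sum_const, nsmul_eq_mul]
      _ = (2/(n:ℝ)) * ∑ k ∈ Finset.range (p+1), (p.choose k : ℝ) * M k := by
          rw [htcard]
          push_cast
          field_simp
  -- apply the recursion
  have hc0 : (0:ℝ) ≤ 2/(n:ℝ) := by positivity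
  have hc1 : 2/(n:ℝ) ≤ 1 := by
    rw [div_le_one hnR]
    exact_mod_cast hn
  have hMle := moment_rec_le B M (2/(n:ℝ)) hc0 hc1 hB0 hBrec hM0 hstep p hp
  -- compare |h| with the sum
  have hhle : ∀ ω, |h ω| ≤ ∑ i ∈ t, X i ω := by
    intro ω
    have hsq : ∑ i ∈ t, X i ω = ∑ i ∈ Finset.range (2*n), X (-(i:ℤ)) ω := by
      rw [htdef]
      exact Finset.sum_image fun a _ b _ hab => hinj hab
    have hsplit : ∑ i ∈ Finset.range (2*n), X (-(i:ℤ)) ω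
        = (∑ i ∈ Finset.range n, X (-(i:ℤ)) ω)
          + ∑ i ∈ Finset.range n, X (-((n:ℤ) + i)) ω := by
      rw [two_mul, Finset.sum_range_add]
      congr 1
    rw [hsq, hsplit, hdef]
    calc |(∑ i ∈ Finset.range n, e ((T ^ (-(i : ℤ))) ω))
          - ∑ i ∈ Finset.range n, e ((T ^ (-((n : ℤ) + i))) ω)|
        ≤ |∑ i ∈ Finset.range n, e ((T ^ (-(i : ℤ))) ω)|
          + |∑ i ∈ Finset.range n, e ((T ^ (-((n : ℤ) + i))) ω)| := abs_sub _ _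
      _ ≤ (∑ i ∈ Finset.range n, X (-(i:ℤ)) ω)
          + ∑ i ∈ Finset.range n, X (-((n:ℤ) + i)) ω := by
          refine add_le_add ?_ ?_
          · exact Finset.abs_sum_le_sum_abs _ _
          · exact Finset.abs_sum_le_sum_abs _ _
  have hhmeas : Measurable h := by
    rw [hdef]
    exact ((Finset.measurable_sum _ fun i _ => he.comp (hTz _).measurable).sub
      (Finset.measurable_sum _ fun i _ => he.comp (hTz _).measurable))
  have hIHp : Integrable (fun ω => |h ω|^p) μ := by
    refine hIntB _ ((2*n:ℝ)^p) (hhmeas.abs.pow_const p) ?_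
    filter_upwards [hSle] with ω hω
    rw [Real.norm_eq_abs, abs_of_nonneg (pow_nonneg (abs_nonneg _) p)]
    exact pow_le_pow_left₀ (abs_nonneg _) ((hhle ω).trans (hω t subset_rfl)) p
  have hfinal : ∫ ω, |h ω|^p ∂μ ≤ M p := by
    refine integral_mono hIHp (hIntS t subset_rfl p) ?_
    intro ω
    exact pow_le_pow_left₀ (abs_nonneg _) (hhle ω) p
  calc ∫ ω, |h ω|^p ∂μ ≤ M p := hfinal
    _ ≤ (2/(n:ℝ)) * B p := hMle
    _ = 2 * B p / n := by ring
end
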